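/- Let N ≥ 1, let (m_1,…,m_t) be a composition of N with partial sums κ_0 = 0, κ_s = m_1+⋯+m_s, and let (n_1,…,n_k; r) be a tuple of nonnegative integers with n_1+⋯+n_k+r = N and partial sums ν_0 = 0, ν_i = n_1+⋯+n_i. Write C_s = [κ_{s−1}+1, κ_s] for s ∈ [1,t], C'_i = [ν_{i−1}+1, ν_i] for i ∈ [1,k] and C'_0 = [ν_k+1, N]. Consider the set S of signed permutations w ∈ 𝒲_N such that: (i) w maps every vector e_x − e_{x+1} with x, x+1 in a common interval C_s to a positive root; (ii) w⁻¹ maps every vector e_x − e_{x+1} with x, x+1 in a common interval C'_i (i ∈ [1,k]), every e_x − e_{x+1} with x, x+1 ∈ C'_0, and (if r ≥ 1) the vector 2e_N, to a positive root; (iii) w maps every vector e_x − e_y with x ≠ y in a common interval C_s to a vector ±(e_u − e_v) with u, v in a common interval C'_i (i ∈ [1,k]) or to a vector of the form ±e_u ± e_v with u, v ∈ C'_0. Then S is in bijection with the set of partitions 𝒟 = (D_1, E_1, …, D_k, E_k, D_0) of [1,t] into 2k+1 (possibly empty) subsets satisfying n_i = Σ_{j ∈ D_i ∪ E_i} m_j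 for i ∈ [1,k] and r = Σ_{j ∈ D_0} m_j. The element w_𝒟 ∈ S attached to 𝒟 is the unique signed permutation determined as follows: writing D_i = {x_{i,1} < ⋯ < x_{i,d_i}} and E_i = {y_{i,e_i} < ⋯ < y_{i,1}}, and tiling C'_i by consecutive subintervals of lengths m_{x_{i,1}},…,m_{x_{i,d_i}}, m_{y_{i,1}},…,m_{y_{i,e_i}} in this order, w_𝒟 maps C_{x_{i,a}} order-preservingly onto the a-th subinterval with w e_s = +e_{s'}, maps C_{y_{i,b}} order-reversingly onto the (d_i+b)-th subinterval with w e_s = −e_{s'}, and, writing D_0 = {z_1 < ⋯ < z_{d_0}}, maps C_{z_1},…,C_{z_{d_0}} order-preservingly with sign + consecutively onto C'_0. -/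

import Mathlib

namespace Stmt12

/-- Partial sums `ν_j = n 0 + ⋯ + n (j-1)` (the tuple is extended by zero beyond `k`). -/
def psum {k : ℕ} (n : Fin k → ℕ) (j : ℕ) : ℕ :=
  ∑ i ∈ Finset.range j, if h : i < k then n ⟨i, h⟩ else 0

/-- Block index of a position `x` with respect to the composition `n`. -/
def blkIdx {k : ℕ} (n : Fin k → ℕ) (x : ℕ) : ℕ :=
  ((Finset.range k).filter (fun j => psum n (j + 1) ≤ x)).card

/-- A positive root of type `C_N` in `ℝ^N`: `e_i - e_j` (`i < j`) or `e_i + e_j` (`i ≤ j`). -/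
def IsPosRoot {N : ℕ} (v : Fin N → ℝ) : Prop :=
  (∃ i j : Fin N, i < j ∧ v = Pi.single i 1 - Pi.single j 1) ∨
  (∃ i j : Fin N, i ≤ j ∧ v = Pi.single i (1 : ℝ) + Pi.single j 1)

/-- The image `w e_i` of `e_i` under the signed permutation `w = τ𝔠`. -/
def wE {N : ℕ} (τ : Equiv.Perm (Fin N)) (c : Finset (Fin N)) (i : Fin N) : Fin N → ℝ :=
  (if i ∈ c then (-1 : ℝ) else 1) • (Pi.single (τ i) 1 : Fin N → ℝ)

/-- The image `w⁻¹ e_u` of `e_u` under the inverse of the signed permutation `w = τ𝔠`. -/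
def wInvE {N : ℕ} (τ : Equiv.Perm (Fin N)) (c : Finset (Fin N)) (u : Fin N) : Fin N → ℝ :=
  (if τ.symm u ∈ c then (-1 : ℝ) else 1) • (Pi.single (τ.symm u) 1 : Fin N → ℝ)

/-- The label of the position `x`: the pair `(i, e)` with `i ∈ Fin (k+1)` and `e : Bool`
recording the part (`D_{i+1}` if `e = false` and `i < k`, `E_{i+1}` if `e = true` and
`i < k`, `D_0` if `i = k`) to which the block `C_s` containing `x` belongs.  The partition
`𝒟 = (D_1, E_1, …, D_k, E_k, D_0)` of `[1,t]` is encoded by `c : Fin t → Fin (k+1) × Bool`. -/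
def labOf {t k : ℕ} (m : Fin t → ℕ) (c : Fin t → Fin (k + 1) × Bool) (x : ℕ) :
    Fin (k + 1) × Bool :=
  if h : blkIdx m x < t then c ⟨blkIdx m x, h⟩ else (Fin.last k, false)

/-- The sorting key realizing the explicit description of `w_𝒟`: positions are ranked by
(target block `i`; `D`-parts before `E`-parts; within the `D`-parts by block ascending and
position ascending; within the `E`-parts by block descending and position descending). -/
def keyD (N : ℕ) {t k : ℕ} (m : Fin t → ℕ) (c : Fin t → Fin (k + 1) × Bool) (x : Fin N) :
    ℕ :=
  ((((labOf m c (x : ℕ)).1 : ℕ) * 2 + (if (labOf m c (x : ℕ)).2 then 1 else 0)) * t +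
      (if (labOf m c (x : ℕ)).2 then t - 1 - blkIdx m (x : ℕ) else blkIdx m (x : ℕ))) * N +
    (if (labOf m c (x : ℕ)).2 then N - 1 - (x : ℕ) else (x : ℕ))

/-- The signed permutation `w_𝒟 = (τ_𝒟, 𝔠_𝒟)` attached to the partition `𝒟`:
`𝔠_𝒟` is the union of the blocks `C_s` with `s` in some `E_i`, and `τ_𝒟` is the inverse of
the stable sorting permutation for the key above; this realizes exactly the tiling
description of `w_𝒟` in the statement. -/
noncomputable def PhiD (N : ℕ) {t k : ℕ} (m : Fin t → ℕ)
    (c : Fin t → Fin (k + 1) × Bool) : Equiv.Perm (Fin N) × Finset (Fin N) :=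
  ((Tuple.sort (keyD N m c))⁻¹,
    Finset.univ.filter (fun x : Fin N => (labOf m c (x : ℕ)).2 = true))

/- ## Basic lemmas -/

lemma lower_mem_iff (F : Finset ℕ) (h : ∀ a b, a < b → b ∈ F → a ∈ F) (j : ℕ) :
    j ∈ F ↔ j < F.card := by
  rcases F.eq_empty_or_nonempty with rfl | hne
  · simp
  · have hM := F.max'_mem hne
    have hF : F = Finset.range (F.max' hne + 1) := by
      ext j; simp only [Finset.mem_range, Nat.lt_succ_iff]
      constructor
      · exact fun hj => F.le_max' j hj
      · intro hj
        rcases eq_or_lt_of_le hj with rfl | hj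
        · exact hM
        · exact h _ _ hj hM
    rw [hF, Finset.card_range, Finset.mem_range]

lemma psum_mono {k : ℕ} (n : Fin k → ℕ) : Monotone (psum n) := by
  intro a b hab
  exact Finset.sum_le_sum_of_subset (Finset.range_subset_range.2 hab)

lemma psum_succ {k : ℕ} (n : Fin k → ℕ) (j : ℕ) (hj : j < k) :
    psum n (j + 1) = psum n j + n ⟨j, hj⟩ := by
  rw [psum, Finset.sum_range_succ, dif_pos hj]; rfl

lemma psum_succ_of_ge {k : ℕ} (n : Fin k → ℕ) (j : ℕ) (hj : k ≤ j) :
    psum n (j + 1) = psum n j := by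
  rw [psum, Finset.sum_range_succ, dif_neg (by omega), add_zero]; rfl

lemma psum_top {k : ℕ} (n : Fin k → ℕ) : psum n k = ∑ i, n i := by
  rw [psum, ← Fin.sum_univ_eq_sum_range (fun i => if h : i < k then n ⟨i, h⟩ else 0) k]
  apply Finset.sum_congr rfl
  intro i _
  simp [i.isLt]

lemma psum_of_ge {k : ℕ} (n : Fin k → ℕ) (j : ℕ) (hj : k ≤ j) :
    psum n j = ∑ i, n i := by
  induction j with
  | zero => have : k = 0 := by omega
            subst this; simpa using (psum_top n).symm ▸ rfl
  | succ j ih =>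
    rcases Nat.lt_or_ge j k with h | h
    · have : j = k - 1 := by omega
      have hk : j + 1 = k := by omega
      rw [hk, psum_top]
    · rw [psum_succ_of_ge n j h, ih h]

lemma lt_blkIdx_iff {k : ℕ} (n : Fin k → ℕ) (u j : ℕ) :
    j < blkIdx n u ↔ j < k ∧ psum n (j + 1) ≤ u := by
  rw [blkIdx, ← lower_mem_iff _ (fun a b hab hb => ?_)]
  · simp
  · simp only [Finset.mem_filter, Finset.mem_range] at hb ⊢
    exact ⟨by omega, le_trans (psum_mono n (by omega)) hb.2⟩

lemma blkIdx_le {k : ℕ} (n : Fin k → ℕ) (u : ℕ) : blkIdx n u ≤ k := by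
  by_contra h
  have := (lt_blkIdx_iff n u k).1 (by omega)
  omega

lemma psum_blkIdx_le {k : ℕ} (n : Fin k → ℕ) (u : ℕ) : psum n (blkIdx n u) ≤ u := by
  rcases Nat.eq_zero_or_pos (blkIdx n u) with h | h
  · simp [h, psum]
  · have := (lt_blkIdx_iff n u (blkIdx n u - 1)).1 (by omega)
    calc psum n (blkIdx n u) = psum n (blkIdx n u - 1 + 1) := by congr 1; omega
    _ ≤ u := this.2

lemma lt_psum_blkIdx_succ {k : ℕ} (n : Fin k → ℕ) (u : ℕ) (h : blkIdx n u < k) :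
    u < psum n (blkIdx n u + 1) := by
  by_contra hc
  have := (lt_blkIdx_iff n u (blkIdx n u)).2 ⟨h, by omega⟩
  omega

lemma blkIdx_eq_iff {k : ℕ} (n : Fin k → ℕ) (u j : ℕ) (hj : j < k) :
    blkIdx n u = j ↔ psum n j ≤ u ∧ u < psum n (j + 1) := by
  constructor
  · rintro rfl
    exact ⟨psum_blkIdx_le n u, lt_psum_blkIdx_succ n u hj⟩
  · rintro ⟨h1, h2⟩
    have hle : blkIdx n u ≤ j := by
      by_contra hc
      have := (lt_blkIdx_iff n u j).1 (by omega)
      omega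
    rcases Nat.eq_zero_or_pos j with rfl | hj0
    · omega
    · have : j - 1 < blkIdx n u := (lt_blkIdx_iff n u (j - 1)).2
        ⟨by omega, by calc psum n (j - 1 + 1) = psum n j := by congr 1; omega
                      _ ≤ u := h1⟩
      omega

lemma blkIdx_lt {k : ℕ} (n : Fin k → ℕ) (u : ℕ) (h : u < ∑ i, n i) : blkIdx n u < k := by
  rcases Nat.lt_or_ge (blkIdx n u) k with hh | hh
  · exact hh
  · exfalso
    have h1 := psum_blkIdx_le n u
    have := psum_of_ge n (blkIdx n u) hh
    omega

lemma blkIdx_eq_of_ge {k : ℕ} (n : Fin k → ℕ) (u : ℕ) (h : ∑ i, n i ≤ u) :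
    blkIdx n u = k := by
  have h1 := blkIdx_le n u
  by_contra hc
  have := lt_psum_blkIdx_succ n u (by omega)
  have h2 : psum n (blkIdx n u + 1) ≤ ∑ i, n i := by
    rw [← psum_top]; exact psum_mono n (by omega)
  omega

lemma psum_le_of_blkIdx {k : ℕ} (n : Fin k → ℕ) {u j : ℕ} (h : j ≤ blkIdx n u) :
    psum n j ≤ u := le_trans (psum_mono n h) (psum_blkIdx_le n u)

lemma blkIdx_mono {k : ℕ} (n : Fin k → ℕ) : Monotone (blkIdx n) := by
  intro a b hab
  by_contra hc
  have := (lt_blkIdx_iff n a (blkIdx n b)).1 (by omega)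
  have h2 := lt_psum_blkIdx_succ n b (by have := blkIdx_le n a; omega)
  omega


section B
variable {N : ℕ}

lemma card_filter_Ico (N a b : ℕ) (hb : b ≤ N) :
    ((Finset.univ : Finset (Fin N)).filter fun x : Fin N => a ≤ (x : ℕ) ∧ (x : ℕ) < b).card
      = b - a := by
  rw [← Nat.card_Ico a b]
  refine Finset.card_bij (fun x _ => (x : ℕ)) ?_ ?_ ?_
  · intro x hx
    simp only [Finset.mem_filter] at hx
    exact Finset.mem_Ico.2 hx.2
  · intro x _ y _ h
    exact Fin.ext h
  · intro v hv
    rw [Finset.mem_Ico] at hv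
    exact ⟨⟨v, by omega⟩, Finset.mem_filter.2 ⟨Finset.mem_univ _, by simpa using hv⟩, rfl⟩

variable {f : Fin N → ℕ} (hf : Function.Injective f)

lemma sort_strictMono (hf : Function.Injective f) :
    StrictMono (f ∘ Tuple.sort f) :=
  (Tuple.monotone_sort f).strictMono_of_injective (hf.comp (Tuple.sort f).injective)

lemma apply_sortInv (x : Fin N) : (f ∘ Tuple.sort f) ((Tuple.sort f)⁻¹ x) = f x := by
  simp

lemma sortInv_lt_iff (hf : Function.Injective f) (x y : Fin N) :
    (Tuple.sort f)⁻¹ x < (Tuple.sort f)⁻¹ y ↔ f x < f y := by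
  rw [← apply_sortInv (f := f) x, ← apply_sortInv (f := f) y]
  exact ((sort_strictMono hf).lt_iff_lt).symm

lemma eq_sortInv (hf : Function.Injective f) (ρ : Equiv.Perm (Fin N))
    (h : ∀ x y, ρ x < ρ y ↔ f x < f y) : ρ = (Tuple.sort f)⁻¹ := by
  have hmono : Monotone (f ∘ ⇑ρ⁻¹) := by
    intro a b hab
    rcases eq_or_lt_of_le hab with rfl | hab
    · exact le_rfl
    · have h0 : ρ (ρ⁻¹ a) < ρ (ρ⁻¹ b) := by simpa using hab
      exact le_of_lt ((h _ _).1 h0)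
  have := Tuple.unique_monotone hmono (Tuple.monotone_sort f)
  have h2 : ∀ x, ρ⁻¹ x = Tuple.sort f x := fun x => hf (congrFun this x)
  have h3 : ρ⁻¹ = Tuple.sort f := Equiv.ext h2
  rw [← h3, inv_inv]

lemma sortInv_lt_card_iff (hf : Function.Injective f) (P : Finset (Fin N))
    (hP : ∀ x ∈ P, ∀ y, f y < f x → y ∈ P) (x : Fin N) :
    (((Tuple.sort f)⁻¹ x : Fin N) : ℕ) < P.card ↔ x ∈ P := by
  set ρ := (Tuple.sort f)⁻¹ with hρ
  set F : Finset ℕ := (P.image (fun y => ρ y)).image (fun v : Fin N => (v : ℕ)) with hF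
  have hcard : F.card = P.card := by
    rw [hF, Finset.card_image_of_injective _ Fin.val_injective,
      Finset.card_image_of_injective _ (Equiv.injective _)]
  have hdc : ∀ a b, a < b → b ∈ F → a ∈ F := by
    intro a b hab hb
    simp only [hF, Finset.mem_image] at hb ⊢
    obtain ⟨vb, ⟨y, hy, rfl⟩, rfl⟩ := hb
    have ha : a < N := lt_trans hab (ρ y).isLt
    refine ⟨⟨a, ha⟩, ⟨ρ⁻¹ ⟨a, ha⟩, ?_, by simp⟩, rfl⟩
    refine hP y hy _ ?_
    rw [← sortInv_lt_iff hf, ← hρ]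
    simpa [Fin.lt_def] using hab
  have hx : x ∈ P ↔ ((ρ x : Fin N) : ℕ) ∈ F := by
    simp only [hF, Finset.mem_image]
    constructor
    · intro h; exact ⟨ρ x, ⟨x, h, rfl⟩, rfl⟩
    · rintro ⟨v, ⟨y, hy, rfl⟩, hv⟩
      have : y = x := by
        have := Fin.val_injective hv
        exact (Equiv.injective _) this
      rwa [← this]
  rw [hx, lower_mem_iff F hdc, hcard]

lemma digit_lt_iff {T a a' b b' : ℕ} (hb : b < T) (hb' : b' < T) :
    a * T + b < a' * T + b' ↔ a < a' ∨ (a = a' ∧ b < b') := by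
  constructor
  · intro h
    rcases lt_trichotomy a a' with h1 | h1 | h1
    · exact Or.inl h1
    · exact Or.inr ⟨h1, by subst h1; omega⟩
    · exfalso
      have h2 : a' * T + T ≤ a * T := by
        calc a' * T + T = (a' + 1) * T := (Nat.succ_mul _ _).symm
        _ ≤ a * T := Nat.mul_le_mul_right T h1
      omega
  · rintro (h1 | ⟨rfl, h1⟩)
    · have h2 : a * T + T ≤ a' * T := by
        calc a * T + T = (a + 1) * T := (Nat.succ_mul _ _).symm
        _ ≤ a' * T := Nat.mul_le_mul_right T h1
      omega
    · omega

end B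

section Roots
variable {N : ℕ}

lemma posRoot_sub {i j : Fin N} (h : i < j) :
    IsPosRoot ((Pi.single i 1 : Fin N → ℝ) - Pi.single j 1) := Or.inl ⟨i, j, h, rfl⟩

lemma posRoot_add (i j : Fin N) :
    IsPosRoot ((Pi.single i 1 : Fin N → ℝ) + Pi.single j 1) := by
  rcases le_total i j with h | h
  · exact Or.inr ⟨i, j, h, rfl⟩
  · exact Or.inr ⟨j, i, h, by rw [add_comm]⟩

lemma single_coord (a b : Fin N) :
    (Pi.single a (1:ℝ) : Fin N → ℝ) b = if b = a then 1 else 0 := by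
  rw [Pi.single_apply]

lemma sub_eq_sub {a b u v : Fin N} (hab : a ≠ b)
    (h : (Pi.single a 1 : Fin N → ℝ) - Pi.single b 1 = Pi.single u 1 - Pi.single v 1) :
    a = u ∧ b = v := by
  constructor
  · by_contra hc
    have h1 := congrFun h a
    simp only [Pi.sub_apply, single_coord, if_pos rfl, if_neg hab, if_neg hc] at h1
    split_ifs at h1 <;> norm_num at h1
  · by_contra hc
    have h2 := congrFun h b
    simp only [Pi.sub_apply, single_coord, if_pos rfl, if_neg (Ne.symm hab),
      if_neg hc] at h2
    split_ifs at h2 <;> norm_num at h2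

lemma sub_ne_add {a b u v : Fin N} (hab : a ≠ b) :
    (Pi.single a 1 : Fin N → ℝ) - Pi.single b 1 ≠ Pi.single u 1 + Pi.single v 1 := by
  intro h
  have h2 := congrFun h b
  simp only [Pi.sub_apply, Pi.add_apply, single_coord, if_pos rfl,
    if_neg (Ne.symm hab)] at h2
  split_ifs at h2 <;> norm_num at h2

lemma sub_ne_neg_add {a b u v : Fin N} (hab : a ≠ b) :
    (Pi.single a 1 : Fin N → ℝ) - Pi.single b 1
      ≠ -((Pi.single u 1 : Fin N → ℝ) + Pi.single v 1) := by
  intro h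
  have h1 := congrFun h a
  simp only [Pi.sub_apply, Pi.add_apply, Pi.neg_apply, single_coord, if_pos rfl,
    if_neg hab] at h1
  split_ifs at h1 <;> norm_num at h1

lemma add_eq_add {a b u v : Fin N} (hab : a ≠ b)
    (h : (Pi.single a 1 : Fin N → ℝ) + Pi.single b 1 = Pi.single u 1 + Pi.single v 1) :
    (a = u ∧ b = v) ∨ (a = v ∧ b = u) := by
  by_cases hau : a = u
  · left
    refine ⟨hau, ?_⟩
    by_contra hc
    have hbu : b ≠ u := by rw [← hau]; exact Ne.symm hab
    have h2 := congrFun h b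
    simp only [Pi.add_apply, single_coord, if_pos rfl, if_neg (Ne.symm hab),
      if_neg hbu, if_neg hc] at h2
    norm_num at h2
  · right
    constructor
    · by_contra hc
      have h1 := congrFun h a
      simp only [Pi.add_apply, single_coord, if_pos rfl, if_neg hab, if_neg hau,
        if_neg hc] at h1
      norm_num at h1
    · by_contra hc
      have hua : u ≠ a := fun hh => hau hh.symm
      have hub : u ≠ b := fun hh => hc hh.symm
      have h3 := congrFun h u
      simp only [Pi.add_apply, single_coord, if_pos rfl, if_neg hua, if_neg hub] at h3
      split_ifs at h3 <;> norm_num at h3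

lemma add_ne_sub {a b u v : Fin N} (hab : a ≠ b) :
    (Pi.single a 1 : Fin N → ℝ) + Pi.single b 1 ≠ Pi.single u 1 - Pi.single v 1 := by
  intro h
  by_cases hau : a = u
  · have hbu : b ≠ u := by rw [← hau]; exact Ne.symm hab
    have h2 := congrFun h b
    simp only [Pi.add_apply, Pi.sub_apply, single_coord, if_pos rfl,
      if_neg (Ne.symm hab), if_neg hbu] at h2
    split_ifs at h2 <;> norm_num at h2
  · have h1 := congrFun h a
    simp only [Pi.add_apply, Pi.sub_apply, single_coord, if_pos rfl, if_neg hab,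
      if_neg hau] at h1
    split_ifs at h1 <;> norm_num at h1

lemma add_ne_neg_sub {a b u v : Fin N} (hab : a ≠ b) :
    (Pi.single a 1 : Fin N → ℝ) + Pi.single b 1
      ≠ -((Pi.single u 1 : Fin N → ℝ) - Pi.single v 1) := by
  intro h
  rw [neg_sub] at h
  exact add_ne_sub hab h

lemma add_ne_neg_add {a b u v : Fin N} (hab : a ≠ b) :
    (Pi.single a 1 : Fin N → ℝ) + Pi.single b 1
      ≠ -((Pi.single u 1 : Fin N → ℝ) + Pi.single v 1) := by
  intro h
  have h1 := congrFun h a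
  simp only [Pi.add_apply, Pi.neg_apply, single_coord, if_pos rfl, if_neg hab] at h1
  split_ifs at h1 <;> norm_num at h1

end Roots

section Key
variable {N t k : ℕ} {m : Fin t → ℕ} {n : Fin k → ℕ}
  (hm : ∀ s, 0 < m s) (hms : ∑ s, m s = N)
  {c : Fin t → Fin (k + 1) × Bool}

lemma blkm_lt (hms : ∑ s, m s = N) (x : Fin N) : blkIdx m (x : ℕ) < t :=
  blkIdx_lt m _ (by rw [hms]; exact x.isLt)

/-- canonical block of `x` as an element of `Fin t` -/
def blkF (hms : ∑ s, m s = N) (x : Fin N) : Fin t := ⟨blkIdx m (x : ℕ), blkm_lt hms x⟩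

lemma labOf_eq (hms : ∑ s, m s = N) (x : Fin N) :
    labOf m c (x : ℕ) = c (blkF hms x) := by
  rw [labOf, dif_pos (blkm_lt hms x)]; rfl

lemma lt_psum_blkF (hm : ∀ s, 0 < m s) (hms : ∑ s, m s = N) (x : Fin N) :
    psum m (blkIdx m (x:ℕ)) ≤ (x:ℕ) ∧ (x:ℕ) < psum m (blkIdx m (x:ℕ) + 1) :=
  (blkIdx_eq_iff m _ _ (blkm_lt hms x)).1 rfl

/-- `x` and `y` lie in the same block `s` -/
lemma blkIdx_eq_of_mem {s : Fin t} {x : Fin N} (hms : ∑ s, m s = N)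
    (h1 : psum m (s : ℕ) ≤ (x : ℕ)) (h2 : (x : ℕ) < psum m ((s : ℕ) + 1)) :
    blkIdx m (x : ℕ) = (s : ℕ) :=
  (blkIdx_eq_iff m _ _ s.isLt).2 ⟨h1, h2⟩

lemma psum_m_le (hms : ∑ s, m s = N) (j : ℕ) : psum m j ≤ N := by
  rcases le_or_gt j t with h | h
  · calc psum m j ≤ psum m t := psum_mono m h
    _ = N := by rw [psum_top, hms]
  · rw [psum_of_ge m j (le_of_lt h), hms]

lemma digit_eq_iff {T a a' b b' : ℕ} (hb : b < T) (hb' : b' < T) :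
    a * T + b = a' * T + b' ↔ a = a' ∧ b = b' := by
  constructor
  · intro h
    rcases Nat.lt_trichotomy a a' with h1 | h1 | h1
    · have h2 : a * T + b < a' * T + b' := (digit_lt_iff hb hb').2 (Or.inl h1)
      omega
    · subst h1
      exact ⟨rfl, by omega⟩
    · have h2 : a' * T + b' < a * T + b := (digit_lt_iff hb' hb).2 (Or.inl h1)
      omega
  · rintro ⟨rfl, rfl⟩; rfl

/-- digits of the key -/
def dig {t k : ℕ} (m : Fin t → ℕ) (c : Fin t → Fin (k + 1) × Bool) (x : ℕ) : ℕ :=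
  ((labOf m c x).1 : ℕ) * 2 + (if (labOf m c x).2 then 1 else 0)

def bposn (t : ℕ) {t' k : ℕ} (m : Fin t' → ℕ) (c : Fin t' → Fin (k + 1) × Bool) (x : ℕ) : ℕ :=
  if (labOf m c x).2 then t - 1 - blkIdx m x else blkIdx m x

def pposn (N : ℕ) {t k : ℕ} (m : Fin t → ℕ) (c : Fin t → Fin (k + 1) × Bool) (x : ℕ) : ℕ :=
  if (labOf m c x).2 then N - 1 - x else x

lemma keyD_eq (x : Fin N) :
    keyD N m c x = (dig m c (x:ℕ) * t + bposn t m c (x:ℕ)) * N + pposn N m c (x:ℕ) := rfl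

lemma bposn_lt (hms : ∑ s, m s = N) (x : Fin N) : bposn t m c (x : ℕ) < t := by
  have h := blkm_lt (m := m) hms x
  rw [bposn]; split_ifs <;> omega

lemma pposn_lt (x : Fin N) : pposn N m c (x : ℕ) < N := by
  have h := x.isLt
  have hN : 0 < N := by omega
  rw [pposn]; split_ifs <;> omega

lemma keyD_lt_iff (hms : ∑ s, m s = N) (x y : Fin N) :
    keyD N m c x < keyD N m c y ↔
      dig m c (x:ℕ) < dig m c (y:ℕ) ∨
        (dig m c (x:ℕ) = dig m c (y:ℕ) ∧
          (bposn t m c (x:ℕ) < bposn t m c (y:ℕ) ∨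
            (bposn t m c (x:ℕ) = bposn t m c (y:ℕ) ∧
              pposn N m c (x:ℕ) < pposn N m c (y:ℕ)))) := by
  rw [keyD_eq, keyD_eq, digit_lt_iff (pposn_lt x) (pposn_lt y),
    digit_lt_iff (bposn_lt hms x) (bposn_lt hms y),
    digit_eq_iff (bposn_lt hms x) (bposn_lt hms y)]
  tauto

lemma dig_eq_iff (x y : Fin N) :
    dig m c (x:ℕ) = dig m c (y:ℕ) ↔ labOf m c (x:ℕ) = labOf m c (y:ℕ) := by
  constructor
  · intro h
    rw [dig, dig] at h
    have h2 : (labOf m c (x:ℕ)).2 = (labOf m c (y:ℕ)).2 := by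
      rcases hx : (labOf m c (x:ℕ)).2 <;> rcases hy : (labOf m c (y:ℕ)).2 <;>
        rw [hx, hy] at h <;> simp at h <;> omega
    have h1 : (labOf m c (x:ℕ)).1 = (labOf m c (y:ℕ)).1 := by
      apply Fin.ext
      rw [h2] at h
      omega
    exact Prod.ext h1 h2
  · intro h; rw [dig, dig, h]

lemma keyD_inj (hms : ∑ s, m s = N) : Function.Injective (keyD N m c) := by
  intro x y h
  have hx := pposn_lt (m := m) (c := c) x
  have hy := pposn_lt (m := m) (c := c) y
  have hbx := bposn_lt (c := c) hms x
  have hby := bposn_lt (c := c) hms y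
  rw [keyD_eq, keyD_eq] at h
  have h1 : dig m c (x:ℕ) * t + bposn t m c (x:ℕ) = dig m c (y:ℕ) * t + bposn t m c (y:ℕ) ∧
      pposn N m c (x:ℕ) = pposn N m c (y:ℕ) := by
    constructor
    · by_contra hc
      rcases Nat.lt_or_ge (dig m c (x:ℕ) * t + bposn t m c (x:ℕ))
        (dig m c (y:ℕ) * t + bposn t m c (y:ℕ)) with hlt | hge
      · have := (digit_lt_iff (T := N) hx hy).2 (Or.inl hlt); omega
      · rcases Nat.lt_or_ge (dig m c (y:ℕ) * t + bposn t m c (y:ℕ))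
          (dig m c (x:ℕ) * t + bposn t m c (x:ℕ)) with hlt2 | hge2
        · have := (digit_lt_iff (T := N) hy hx).2 (Or.inl hlt2); omega
        · exact hc (by omega)
    · by_contra hc
      rcases Nat.lt_or_ge (dig m c (x:ℕ) * t + bposn t m c (x:ℕ))
        (dig m c (y:ℕ) * t + bposn t m c (y:ℕ)) with hlt | hge
      · have := (digit_lt_iff (T := N) hx hy).2 (Or.inl hlt); omega
      · rcases eq_or_lt_of_le hge with heq | hlt2
        · rcases Nat.lt_or_ge (pposn N m c (x:ℕ)) (pposn N m c (y:ℕ)) with hp | hp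
          · have := (digit_lt_iff (T := N) hx hy).2 (Or.inr ⟨heq.symm, hp⟩); omega
          · rcases eq_or_lt_of_le hp with hp2 | hp2
            · exact hc hp2.symm
            · have := (digit_lt_iff (T := N) hy hx).2 (Or.inr ⟨heq, hp2⟩); omega
        · have := (digit_lt_iff (T := N) hy hx).2 (Or.inl hlt2); omega
  obtain ⟨hD, hP⟩ := h1
  have hdig : dig m c (x:ℕ) = dig m c (y:ℕ) := by
    by_contra hc
    rcases Nat.lt_or_ge (dig m c (x:ℕ)) (dig m c (y:ℕ)) with hlt | hge
    · have := (digit_lt_iff (T := t) hbx hby).2 (Or.inl hlt); omega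
    · rcases eq_or_lt_of_le hge with heq | hlt2
      · exact hc heq.symm
      · have := (digit_lt_iff (T := t) hby hbx).2 (Or.inl hlt2); omega
  have hlab := (dig_eq_iff x y).1 hdig
  apply Fin.ext
  rw [pposn, pposn, hlab] at hP
  have := x.isLt; have := y.isLt
  split_ifs at hP <;> omega

/-- counting positions whose block satisfies `Q` -/
lemma card_filter_blocks (hm : ∀ s, 0 < m s) (hms : ∑ s, m s = N)
    (Q : Fin t → Prop) [DecidablePred Q] :
    ((Finset.univ : Finset (Fin N)).filter fun x : Fin N => Q (blkF hms x)).card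
      = ∑ s ∈ Finset.univ.filter Q, m s := by
  have hmaps : ∀ x ∈ (Finset.univ : Finset (Fin N)).filter fun x : Fin N => Q (blkF hms x),
      blkF hms x ∈ Finset.univ.filter Q := by
    intro x hx
    simp only [Finset.mem_filter] at hx ⊢
    exact ⟨Finset.mem_univ _, hx.2⟩
  rw [Finset.card_eq_sum_card_fiberwise hmaps]
  apply Finset.sum_congr rfl
  intro s hs
  simp only [Finset.mem_filter] at hs
  have : ((Finset.univ : Finset (Fin N)).filter fun x : Fin N => Q (blkF hms x)).filter
      (fun x => blkF hms x = s) = (Finset.univ : Finset (Fin N)).filter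
      (fun x : Fin N => psum m (s:ℕ) ≤ (x:ℕ) ∧ (x:ℕ) < psum m ((s:ℕ)+1)) := by
    ext x
    simp only [Finset.mem_filter, Finset.mem_univ, true_and]
    constructor
    · rintro ⟨_, rfl⟩
      exact lt_psum_blkF hm hms x
    · rintro ⟨h1, h2⟩
      have hb : blkF hms x = s := Fin.ext (blkIdx_eq_of_mem hms h1 h2)
      rw [hb]
      exact ⟨hs.2, rfl⟩
  rw [this, card_filter_Ico N _ _ ?hle, psum_succ m (s:ℕ) s.isLt]
  · simp only [Fin.eta]; omega
  case hle =>
    calc psum m ((s:ℕ)+1) ≤ psum m t := psum_mono m s.isLt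
    _ = N := by rw [psum_top, hms]

end Key

/- ### Forward direction -/
section Fwd
variable {N t k : ℕ} {m : Fin t → ℕ} {n : Fin k → ℕ} {r : ℕ}
  {c : Fin t → Fin (k + 1) × Bool}

/-- sum over blocks with label `.1 < i` -/
lemma sum_blocks_lt (hc2 : ∀ i : Fin k, n i =
      ∑ s ∈ Finset.univ.filter (fun s => (c s).1 = i.castSucc), m s)
    (i : ℕ) (hi : i ≤ k) :
    ∑ s ∈ Finset.univ.filter (fun s => ((c s).1 : ℕ) < i), m s = psum n i := by
  induction i with
  | zero => simp [psum]
  | succ i ih =>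
    have hik : i < k := by omega
    have hsplit : (Finset.univ.filter (fun s => ((c s).1 : ℕ) < i + 1))
        = (Finset.univ.filter (fun s => ((c s).1 : ℕ) < i))
          ∪ (Finset.univ.filter (fun s => (c s).1 = (⟨i, hik⟩ : Fin k).castSucc)) := by
      ext s
      simp only [Finset.mem_filter, Finset.mem_union, Finset.mem_univ, true_and]
      constructor
      · intro h
        rcases Nat.lt_or_ge ((c s).1 : ℕ) i with h1 | h1
        · exact Or.inl h1
        · right
          apply Fin.ext
          simp only [Fin.coe_castSucc]
          omega
      · rintro (h | h)
        · omega
        · rw [h]; simp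
    have hdisj : Disjoint (Finset.univ.filter (fun s => ((c s).1 : ℕ) < i))
        (Finset.univ.filter (fun s => (c s).1 = (⟨i, hik⟩ : Fin k).castSucc)) := by
      rw [Finset.disjoint_filter]
      intro s _ h1 h2
      rw [h2] at h1
      simp at h1
    rw [hsplit, Finset.sum_union hdisj, ih (by omega), ← hc2 ⟨i, hik⟩,
      psum_succ n i hik]

lemma card_lab_lt (hm : ∀ s, 0 < m s) (hms : ∑ s, m s = N)
    (hc2 : ∀ i : Fin k, n i =
      ∑ s ∈ Finset.univ.filter (fun s => (c s).1 = i.castSucc), m s)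
    (i : ℕ) (hi : i ≤ k) :
    ((Finset.univ : Finset (Fin N)).filter
      fun x : Fin N => ((labOf m c (x:ℕ)).1 : ℕ) < i).card = psum n i := by
  have : ((Finset.univ : Finset (Fin N)).filter
      fun x : Fin N => ((labOf m c (x:ℕ)).1 : ℕ) < i)
      = ((Finset.univ : Finset (Fin N)).filter
        fun x : Fin N => ((c (blkF hms x)).1 : ℕ) < i) := by
    apply Finset.filter_congr
    intro x _
    rw [labOf_eq hms]
  rw [this, card_filter_blocks hm hms (fun s => ((c s).1 : ℕ) < i), sum_blocks_lt hc2 i hi]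

lemma key_lt_of_lab_lt (hms : ∑ s, m s = N) {x y : Fin N}
    (h : ((labOf m c (x:ℕ)).1 : ℕ) < ((labOf m c (y:ℕ)).1 : ℕ)) :
    keyD N m c x < keyD N m c y := by
  rw [keyD_lt_iff hms]
  left
  rw [dig, dig]
  split_ifs <;> omega

/-- The central interval lemma. -/
lemma tau_lt_psum_iff (hm : ∀ s, 0 < m s) (hms : ∑ s, m s = N)
    (hc2 : ∀ i : Fin k, n i =
      ∑ s ∈ Finset.univ.filter (fun s => (c s).1 = i.castSucc), m s)
    (i : ℕ) (hi : i ≤ k) (x : Fin N) :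
    (((Tuple.sort (keyD N m c))⁻¹ x : Fin N) : ℕ) < psum n i ↔
      ((labOf m c (x:ℕ)).1 : ℕ) < i := by
  rw [← card_lab_lt hm hms hc2 i hi]
  rw [sortInv_lt_card_iff (keyD_inj hms)]
  · simp
  · intro a ha b hb
    simp only [Finset.mem_filter, Finset.mem_univ, true_and] at ha ⊢
    by_contra hc
    have : ((labOf m c (a:ℕ)).1 : ℕ) < ((labOf m c (b:ℕ)).1 : ℕ) := by omega
    have := key_lt_of_lab_lt hms this
    omega

end Fwd

section Fwd2
variable {N t k : ℕ} {m : Fin t → ℕ} {n : Fin k → ℕ} {r : ℕ}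
  {c : Fin t → Fin (k + 1) × Bool}

lemma lab1_le (x : ℕ) : ((labOf m c x).1 : ℕ) ≤ k :=
  Nat.lt_succ_iff.1 (labOf m c x).1.isLt

lemma lab1_eq_iff_low (hm : ∀ s, 0 < m s) (hms : ∑ s, m s = N)
    (hc2 : ∀ i : Fin k, n i =
      ∑ s ∈ Finset.univ.filter (fun s => (c s).1 = i.castSucc), m s)
    (i : ℕ) (hik : i < k) (x : Fin N) :
    ((labOf m c (x:ℕ)).1 : ℕ) = i ↔
      psum n i ≤ (((Tuple.sort (keyD N m c))⁻¹ x : Fin N) : ℕ) ∧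
        (((Tuple.sort (keyD N m c))⁻¹ x : Fin N) : ℕ) < psum n (i + 1) := by
  have h1 := tau_lt_psum_iff (n := n) hm hms hc2 i (by omega) x
  have h2 := tau_lt_psum_iff (n := n) hm hms hc2 (i + 1) (by omega) x
  omega

lemma lab1_eq_iff_top (hm : ∀ s, 0 < m s) (hms : ∑ s, m s = N)
    (hc2 : ∀ i : Fin k, n i =
      ∑ s ∈ Finset.univ.filter (fun s => (c s).1 = i.castSucc), m s)
    (x : Fin N) :
    ((labOf m c (x:ℕ)).1 : ℕ) = k ↔
      psum n k ≤ (((Tuple.sort (keyD N m c))⁻¹ x : Fin N) : ℕ) := by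
  have h1 := tau_lt_psum_iff (n := n) hm hms hc2 k le_rfl x
  have h2 := lab1_le (m := m) (c := c) (x : ℕ)
  omega

lemma lt_of_key_lt_ff (hms : ∑ s, m s = N) {x y : Fin N}
    (hlab : labOf m c (x:ℕ) = labOf m c (y:ℕ)) (he : (labOf m c (x:ℕ)).2 = false)
    (h : keyD N m c x < keyD N m c y) : x < y := by
  rw [keyD_lt_iff hms] at h
  have hd : dig m c (x:ℕ) = dig m c (y:ℕ) := by rw [dig, dig, hlab]
  have hey : (labOf m c (y:ℕ)).2 = false := by rw [← hlab]; exact he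
  rw [Fin.lt_def]
  rcases h with h | ⟨_, h | ⟨hb, hp⟩⟩
  · omega
  · rw [bposn, bposn, he, hey] at h
    simp only [Bool.false_eq_true, if_false] at h
    by_contra hc
    have h2 : (y:ℕ) ≤ (x:ℕ) := by omega
    have := blkIdx_mono m h2
    omega
  · rw [pposn, pposn, he, hey] at hp
    simpa using hp

lemma lt_of_key_lt_tt (hms : ∑ s, m s = N) {x y : Fin N}
    (hlab : labOf m c (x:ℕ) = labOf m c (y:ℕ)) (he : (labOf m c (x:ℕ)).2 = true)
    (h : keyD N m c x < keyD N m c y) : y < x := by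
  rw [keyD_lt_iff hms] at h
  have hd : dig m c (x:ℕ) = dig m c (y:ℕ) := by rw [dig, dig, hlab]
  have hey : (labOf m c (y:ℕ)).2 = true := by rw [← hlab]; exact he
  have hxN := x.isLt
  have hyN := y.isLt
  rw [Fin.lt_def]
  rcases h with h | ⟨_, h | ⟨hb, hp⟩⟩
  · omega
  · rw [bposn, bposn, he, hey] at h
    simp only [if_true] at h
    have hbx := blkm_lt (m := m) hms x
    have hby := blkm_lt (m := m) hms y
    by_contra hc
    have h2 : (x:ℕ) ≤ (y:ℕ) := by omega
    have := blkIdx_mono m h2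
    omega
  · rw [pposn, pposn, he, hey] at hp
    simp only [if_true] at hp
    omega

lemma key_lt_of_dig_lt (hms : ∑ s, m s = N) {x y : Fin N}
    (h : dig m c (x:ℕ) < dig m c (y:ℕ)) : keyD N m c x < keyD N m c y :=
  (keyD_lt_iff hms x y).2 (Or.inl h)

lemma key_lt_same_ff (hms : ∑ s, m s = N) {x y : Fin N}
    (hlab : labOf m c (x:ℕ) = labOf m c (y:ℕ)) (he : (labOf m c (x:ℕ)).2 = false)
    (hblk : blkIdx m (x:ℕ) = blkIdx m (y:ℕ)) (hxy : (x:ℕ) < (y:ℕ)) :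
    keyD N m c x < keyD N m c y := by
  have hey : (labOf m c (y:ℕ)).2 = false := by rw [← hlab]; exact he
  refine (keyD_lt_iff hms x y).2 (Or.inr ⟨by rw [dig, dig, hlab], Or.inr ⟨?_, ?_⟩⟩)
  · rw [bposn, bposn, he, hey, hblk]
  · rw [pposn, pposn, he, hey]
    simpa using hxy

lemma key_lt_same_tt (hms : ∑ s, m s = N) {x y : Fin N}
    (hlab : labOf m c (x:ℕ) = labOf m c (y:ℕ)) (he : (labOf m c (x:ℕ)).2 = true)
    (hblk : blkIdx m (x:ℕ) = blkIdx m (y:ℕ)) (hxy : (y:ℕ) < (x:ℕ)) :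
    keyD N m c x < keyD N m c y := by
  have hey : (labOf m c (y:ℕ)).2 = true := by rw [← hlab]; exact he
  have hxN := x.isLt
  refine (keyD_lt_iff hms x y).2 (Or.inr ⟨by rw [dig, dig, hlab], Or.inr ⟨?_, ?_⟩⟩)
  · rw [bposn, bposn, he, hey, hblk]
  · rw [pposn, pposn, he, hey]
    simp only [if_true]
    omega

lemma key_lt_blk_ff (hms : ∑ s, m s = N) {x y : Fin N}
    (hlab : labOf m c (x:ℕ) = labOf m c (y:ℕ)) (he : (labOf m c (x:ℕ)).2 = false)
    (hblk : blkIdx m (x:ℕ) < blkIdx m (y:ℕ)) :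
    keyD N m c x < keyD N m c y := by
  have hey : (labOf m c (y:ℕ)).2 = false := by rw [← hlab]; exact he
  refine (keyD_lt_iff hms x y).2 (Or.inr ⟨by rw [dig, dig, hlab], Or.inl ?_⟩)
  rw [bposn, bposn, he, hey]
  simpa using hblk

lemma key_lt_blk_tt (hms : ∑ s, m s = N) {x y : Fin N}
    (hlab : labOf m c (x:ℕ) = labOf m c (y:ℕ)) (he : (labOf m c (x:ℕ)).2 = true)
    (hblk : blkIdx m (y:ℕ) < blkIdx m (x:ℕ)) :
    keyD N m c x < keyD N m c y := by
  have hey : (labOf m c (y:ℕ)).2 = true := by rw [← hlab]; exact he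
  have hbx := blkm_lt (m := m) hms x
  refine (keyD_lt_iff hms x y).2 (Or.inr ⟨by rw [dig, dig, hlab], Or.inl ?_⟩)
  rw [bposn, bposn, he, hey]
  simp only [if_true]
  omega

lemma mem_Phi2_iff (x : Fin N) :
    x ∈ (PhiD N m c).2 ↔ (labOf m c (x:ℕ)).2 = true := by
  simp [PhiD]

end Fwd2

section FwdMain
variable {N t k : ℕ} {m : Fin t → ℕ} {n : Fin k → ℕ} {r : ℕ}
  {c : Fin t → Fin (k + 1) × Bool}

lemma phiD_mem (hN : 1 ≤ N) (hm : ∀ s, 0 < m s) (hms : ∑ s, m s = N)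
    (hnr : (∑ i, n i) + r = N)
    (hc1 : ∀ s, (c s).1 = Fin.last k → (c s).2 = false)
    (hc2 : ∀ i : Fin k, n i =
      ∑ s ∈ Finset.univ.filter (fun s => (c s).1 = i.castSucc), m s)
    (hc3 : r = ∑ s ∈ Finset.univ.filter (fun s => (c s).1 = Fin.last k), m s) :
    (∀ s : Fin t, ∀ x y : Fin N, psum m (s : ℕ) ≤ (x : ℕ) → (y : ℕ) = (x : ℕ) + 1 →
      (y : ℕ) < psum m ((s : ℕ) + 1) →
      IsPosRoot (wE (PhiD N m c).1 (PhiD N m c).2 x - wE (PhiD N m c).1 (PhiD N m c).2 y)) ∧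
    (∀ i : Fin k, ∀ x y : Fin N, psum n (i : ℕ) ≤ (x : ℕ) → (y : ℕ) = (x : ℕ) + 1 →
      (y : ℕ) < psum n ((i : ℕ) + 1) →
      IsPosRoot (wInvE (PhiD N m c).1 (PhiD N m c).2 x
        - wInvE (PhiD N m c).1 (PhiD N m c).2 y)) ∧
    (∀ x y : Fin N, (∑ i, n i) ≤ (x : ℕ) → (y : ℕ) = (x : ℕ) + 1 →
      IsPosRoot (wInvE (PhiD N m c).1 (PhiD N m c).2 x
        - wInvE (PhiD N m c).1 (PhiD N m c).2 y)) ∧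
    (1 ≤ r → IsPosRoot ((2 : ℝ) • wInvE (PhiD N m c).1 (PhiD N m c).2 ⟨N - 1, by omega⟩)) ∧
    (∀ s : Fin t, ∀ x y : Fin N,
      psum m (s : ℕ) ≤ (x : ℕ) → (x : ℕ) < psum m ((s : ℕ) + 1) →
      psum m (s : ℕ) ≤ (y : ℕ) → (y : ℕ) < psum m ((s : ℕ) + 1) → x ≠ y →
      ((∃ i : Fin k, ∃ u v : Fin N,
          psum n (i : ℕ) ≤ (u : ℕ) ∧ (u : ℕ) < psum n ((i : ℕ) + 1) ∧
          psum n (i : ℕ) ≤ (v : ℕ) ∧ (v : ℕ) < psum n ((i : ℕ) + 1) ∧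
          (wE (PhiD N m c).1 (PhiD N m c).2 x - wE (PhiD N m c).1 (PhiD N m c).2 y =
              (Pi.single u 1 : Fin N → ℝ) - Pi.single v 1 ∨
            wE (PhiD N m c).1 (PhiD N m c).2 x - wE (PhiD N m c).1 (PhiD N m c).2 y =
              -((Pi.single u 1 : Fin N → ℝ) - Pi.single v 1))) ∨
        (∃ u v : Fin N, (∑ i, n i) ≤ (u : ℕ) ∧ (∑ i, n i) ≤ (v : ℕ) ∧
          (wE (PhiD N m c).1 (PhiD N m c).2 x - wE (PhiD N m c).1 (PhiD N m c).2 y =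
              (Pi.single u 1 : Fin N → ℝ) + Pi.single v 1 ∨
            wE (PhiD N m c).1 (PhiD N m c).2 x - wE (PhiD N m c).1 (PhiD N m c).2 y =
              -((Pi.single u 1 : Fin N → ℝ) + Pi.single v 1) ∨
            wE (PhiD N m c).1 (PhiD N m c).2 x - wE (PhiD N m c).1 (PhiD N m c).2 y =
              (Pi.single u 1 : Fin N → ℝ) - Pi.single v 1 ∨
            wE (PhiD N m c).1 (PhiD N m c).2 x - wE (PhiD N m c).1 (PhiD N m c).2 y =
              -((Pi.single u 1 : Fin N → ℝ) - Pi.single v 1))))) := by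
  have τlt : ∀ x y : Fin N, (PhiD N m c).1 x < (PhiD N m c).1 y ↔
      keyD N m c x < keyD N m c y := fun x y => sortInv_lt_iff (keyD_inj hms) x y
  have happ : ∀ u : Fin N, (PhiD N m c).1 ((PhiD N m c).1.symm u) = u :=
    fun u => Equiv.apply_symm_apply _ u
  refine ⟨?_, ?_, ?_, ?_, ?_⟩
  · -- (i)
    intro s x y hx hxy hy
    have hbx : blkIdx m (x:ℕ) = (s:ℕ) := (blkIdx_eq_iff m _ _ s.isLt).2 ⟨hx, by omega⟩
    have hby : blkIdx m (y:ℕ) = (s:ℕ) := (blkIdx_eq_iff m _ _ s.isLt).2 ⟨by omega, hy⟩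
    have hlx : labOf m c (x:ℕ) = c s := by
      rw [labOf_eq hms]; congr 1; exact Fin.ext hbx
    have hly : labOf m c (y:ℕ) = c s := by
      rw [labOf_eq hms]; congr 1; exact Fin.ext hby
    have hlab : labOf m c (x:ℕ) = labOf m c (y:ℕ) := by rw [hlx, hly]
    have hblk : blkIdx m (x:ℕ) = blkIdx m (y:ℕ) := by rw [hbx, hby]
    cases hcs : (c s).2 with
    | false =>
      have hxm : x ∉ (PhiD N m c).2 := by
        rw [mem_Phi2_iff, hlx, hcs]; simp
      have hym : y ∉ (PhiD N m c).2 := by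
        rw [mem_Phi2_iff, hly, hcs]; simp
      rw [wE, wE, if_neg hxm, if_neg hym, one_smul, one_smul]
      exact posRoot_sub ((τlt x y).2
        (key_lt_same_ff hms hlab (by rw [hlx, hcs]) hblk (by omega)))
    | true =>
      have hxm : x ∈ (PhiD N m c).2 := by rw [mem_Phi2_iff, hlx, hcs]
      have hym : y ∈ (PhiD N m c).2 := by rw [mem_Phi2_iff, hly, hcs]
      rw [wE, wE, if_pos hxm, if_pos hym, neg_smul, neg_smul, one_smul, one_smul,
        neg_sub_neg]
      exact posRoot_sub ((τlt y x).2
        (key_lt_same_tt hms hlab.symm (by rw [hly, hcs]) hblk.symm (by omega)))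
  · -- (ii) inside C'_i
    intro i x y hx hxy hy
    have hτa := happ x
    have hτb := happ y
    have hτav : (((Tuple.sort (keyD N m c))⁻¹ ((PhiD N m c).1.symm x) : Fin N) : ℕ)
        = (x : ℕ) := congrArg Fin.val hτa
    have hτbv : (((Tuple.sort (keyD N m c))⁻¹ ((PhiD N m c).1.symm y) : Fin N) : ℕ)
        = (y : ℕ) := congrArg Fin.val hτb
    have hla : ((labOf m c (((PhiD N m c).1.symm x : Fin N):ℕ)).1 : ℕ) = (i:ℕ) :=
      (lab1_eq_iff_low hm hms hc2 (i:ℕ) i.isLt _).2 (by omega)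
    have hlb : ((labOf m c (((PhiD N m c).1.symm y : Fin N):ℕ)).1 : ℕ) = (i:ℕ) :=
      (lab1_eq_iff_low hm hms hc2 (i:ℕ) i.isLt _).2 (by omega)
    have hKab : keyD N m c ((PhiD N m c).1.symm x) < keyD N m c ((PhiD N m c).1.symm y) := by
      rw [← τlt, hτa, hτb]
      rw [Fin.lt_def]
      omega
    cases hea : (labOf m c (((PhiD N m c).1.symm x : Fin N):ℕ)).2 with
    | false =>
      have hma : (PhiD N m c).1.symm x ∉ (PhiD N m c).2 := by
        rw [mem_Phi2_iff, hea]; simp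
      cases heb : (labOf m c (((PhiD N m c).1.symm y : Fin N):ℕ)).2 with
      | false =>
        have hmb : (PhiD N m c).1.symm y ∉ (PhiD N m c).2 := by
          rw [mem_Phi2_iff, heb]; simp
        rw [wInvE, wInvE, if_neg hma, if_neg hmb, one_smul, one_smul]
        refine posRoot_sub (lt_of_key_lt_ff hms ?_ hea hKab)
        exact Prod.ext (Fin.ext (by omega)) (by rw [hea, heb])
      | true =>
        have hmb : (PhiD N m c).1.symm y ∈ (PhiD N m c).2 := by
          rw [mem_Phi2_iff, heb]
        rw [wInvE, wInvE, if_neg hma, if_pos hmb, one_smul, neg_smul, one_smul,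
          sub_neg_eq_add]
        exact posRoot_add _ _
    | true =>
      cases heb : (labOf m c (((PhiD N m c).1.symm y : Fin N):ℕ)).2 with
      | false =>
        exfalso
        have : keyD N m c ((PhiD N m c).1.symm y)
            < keyD N m c ((PhiD N m c).1.symm x) := by
          apply key_lt_of_dig_lt hms
          rw [dig, dig, hea, heb]
          simp only [if_true, Bool.false_eq_true, if_false]
          omega
        omega
      | true =>
        have hma : (PhiD N m c).1.symm x ∈ (PhiD N m c).2 := by
          rw [mem_Phi2_iff, hea]
        have hmb : (PhiD N m c).1.symm y ∈ (PhiD N m c).2 := by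
          rw [mem_Phi2_iff, heb]
        rw [wInvE, wInvE, if_pos hma, if_pos hmb, neg_smul, neg_smul, one_smul,
          one_smul, neg_sub_neg]
        refine posRoot_sub (lt_of_key_lt_tt hms ?_ hea hKab)
        exact Prod.ext (Fin.ext (by omega)) (by rw [hea, heb])
  · -- (ii) inside C'_0
    intro x y hx hxy
    have hy : (y:ℕ) < N := y.isLt
    have hτa := happ x
    have hτb := happ y
    have hτav : (((Tuple.sort (keyD N m c))⁻¹ ((PhiD N m c).1.symm x) : Fin N) : ℕ)
        = (x : ℕ) := congrArg Fin.val hτa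
    have hτbv : (((Tuple.sort (keyD N m c))⁻¹ ((PhiD N m c).1.symm y) : Fin N) : ℕ)
        = (y : ℕ) := congrArg Fin.val hτb
    have hpt : psum n k = ∑ i, n i := psum_top n
    have hla : ((labOf m c (((PhiD N m c).1.symm x : Fin N):ℕ)).1 : ℕ) = k :=
      (lab1_eq_iff_top hm hms hc2 _).2 (by omega)
    have hlb : ((labOf m c (((PhiD N m c).1.symm y : Fin N):ℕ)).1 : ℕ) = k :=
      (lab1_eq_iff_top hm hms hc2 _).2 (by omega)
    have hea : (labOf m c (((PhiD N m c).1.symm x : Fin N):ℕ)).2 = false := by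
      rw [labOf_eq hms] at hla ⊢
      exact hc1 _ (Fin.ext (by rw [Fin.val_last]; exact hla))
    have heb : (labOf m c (((PhiD N m c).1.symm y : Fin N):ℕ)).2 = false := by
      rw [labOf_eq hms] at hlb ⊢
      exact hc1 _ (Fin.ext (by rw [Fin.val_last]; exact hlb))
    have hma : (PhiD N m c).1.symm x ∉ (PhiD N m c).2 := by
      rw [mem_Phi2_iff, hea]; simp
    have hmb : (PhiD N m c).1.symm y ∉ (PhiD N m c).2 := by
      rw [mem_Phi2_iff, heb]; simp
    have hKab : keyD N m c ((PhiD N m c).1.symm x) < keyD N m c ((PhiD N m c).1.symm y) := by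
      rw [← τlt, hτa, hτb, Fin.lt_def]
      omega
    rw [wInvE, wInvE, if_neg hma, if_neg hmb, one_smul, one_smul]
    refine posRoot_sub (lt_of_key_lt_ff hms ?_ hea hKab)
    exact Prod.ext (Fin.ext (by omega)) (by rw [hea, heb])
  · -- 2 e_N
    intro hr
    have hpt : psum n k = ∑ i, n i := psum_top n
    have hp : N - 1 < N := by omega
    obtain ⟨a, ha⟩ : ∃ a : Fin N, (PhiD N m c).1 a = ⟨N - 1, hp⟩ :=
      ⟨(PhiD N m c).1.symm ⟨N - 1, hp⟩, happ _⟩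
    have hav : (((Tuple.sort (keyD N m c))⁻¹ a : Fin N) : ℕ) = N - 1 :=
      congrArg Fin.val ha
    have hla : ((labOf m c ((a : Fin N):ℕ)).1 : ℕ) = k :=
      (lab1_eq_iff_top hm hms hc2 _).2 (by omega)
    have hea : (labOf m c ((a : Fin N):ℕ)).2 = false := by
      rw [labOf_eq hms] at hla ⊢
      exact hc1 _ (Fin.ext (by rw [Fin.val_last]; exact hla))
    have hma : a ∉ (PhiD N m c).2 := by
      rw [mem_Phi2_iff, hea]; simp
    have ha' : (PhiD N m c).1.symm ⟨N - 1, hp⟩ = a := by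
      rw [← ha]; exact Equiv.symm_apply_apply _ a
    show IsPosRoot ((2 : ℝ) • wInvE (PhiD N m c).1 (PhiD N m c).2 ⟨N - 1, hp⟩)
    rw [wInvE, ha', if_neg hma, one_smul, two_smul]
    exact posRoot_add a a
  · -- (iii)
    intro s x y hx hx2 hy hy2 hxy
    have hbx : blkIdx m (x:ℕ) = (s:ℕ) := (blkIdx_eq_iff m _ _ s.isLt).2 ⟨hx, hx2⟩
    have hby : blkIdx m (y:ℕ) = (s:ℕ) := (blkIdx_eq_iff m _ _ s.isLt).2 ⟨hy, hy2⟩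
    have hlx : labOf m c (x:ℕ) = c s := by
      rw [labOf_eq hms]; congr 1; exact Fin.ext hbx
    have hly : labOf m c (y:ℕ) = c s := by
      rw [labOf_eq hms]; congr 1; exact Fin.ext hby
    rcases Nat.lt_or_ge (((c s).1 : Fin (k+1)) : ℕ) k with hk | hk
    · left
      have hbnd1 := (lab1_eq_iff_low hm hms hc2 (((c s).1 : Fin (k+1)) : ℕ) hk x).1
        (by rw [hlx])
      have hbnd2 := (lab1_eq_iff_low hm hms hc2 (((c s).1 : Fin (k+1)) : ℕ) hk y).1
        (by rw [hly])
      refine ⟨⟨(((c s).1 : Fin (k+1)) : ℕ), hk⟩, (PhiD N m c).1 x, (PhiD N m c).1 y,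
        hbnd1.1, hbnd1.2, hbnd2.1, hbnd2.2, ?_⟩
      cases hcs : (c s).2 with
      | false =>
        have hxm : x ∉ (PhiD N m c).2 := by rw [mem_Phi2_iff, hlx, hcs]; simp
        have hym : y ∉ (PhiD N m c).2 := by rw [mem_Phi2_iff, hly, hcs]; simp
        rw [wE, wE, if_neg hxm, if_neg hym, one_smul, one_smul]
        exact Or.inl rfl
      | true =>
        have hxm : x ∈ (PhiD N m c).2 := by rw [mem_Phi2_iff, hlx, hcs]
        have hym : y ∈ (PhiD N m c).2 := by rw [mem_Phi2_iff, hly, hcs]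
        rw [wE, wE, if_pos hxm, if_pos hym, neg_smul, neg_smul, one_smul, one_smul]
        right
        rw [neg_sub_neg, neg_sub]
    · right
      have hkv : (((c s).1 : Fin (k+1)) : ℕ) = k := by
        have := Nat.lt_succ_iff.1 ((c s).1).isLt
        omega
      have hpt : psum n k = ∑ i, n i := psum_top n
      have hbnd1' : psum n k ≤ (((Tuple.sort (keyD N m c))⁻¹ x : Fin N) : ℕ) := by
        have := (lab1_eq_iff_top hm hms hc2 x).1 (by rw [hlx]; exact hkv)
        exact this
      have hbnd2' : psum n k ≤ (((Tuple.sort (keyD N m c))⁻¹ y : Fin N) : ℕ) := by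
        have := (lab1_eq_iff_top hm hms hc2 y).1 (by rw [hly]; exact hkv)
        exact this
      have hcs : (c s).2 = false := hc1 _ (Fin.ext (by rw [Fin.val_last]; exact hkv))
      have hxm : x ∉ (PhiD N m c).2 := by rw [mem_Phi2_iff, hlx, hcs]; simp
      have hym : y ∉ (PhiD N m c).2 := by rw [mem_Phi2_iff, hly, hcs]; simp
      have hbnd1'' : psum n k ≤ (((PhiD N m c).1 x : Fin N) : ℕ) := hbnd1'
      have hbnd2'' : psum n k ≤ (((PhiD N m c).1 y : Fin N) : ℕ) := hbnd2'
      refine ⟨(PhiD N m c).1 x, (PhiD N m c).1 y, by omega, by omega, ?_⟩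
      rw [wE, wE, if_neg hxm, if_neg hym, one_smul, one_smul]
      exact Or.inr (Or.inr (Or.inl rfl))

end FwdMain

section Decode
variable {N : ℕ}

lemma pm_single_decode {a b : Fin N} (hab : a ≠ b) (Pa Pb : Prop)
    [Decidable Pa] [Decidable Pb]
    (h : IsPosRoot ((if Pa then (-1:ℝ) else 1) • (Pi.single a 1 : Fin N → ℝ)
      - (if Pb then (-1:ℝ) else 1) • (Pi.single b 1 : Fin N → ℝ))) :
    (¬Pa ∧ ¬Pb ∧ a < b) ∨ (Pa ∧ Pb ∧ b < a) ∨ (¬Pa ∧ Pb) := by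
  by_cases hpa : Pa <;> by_cases hpb : Pb
  · -- (T,T)
    rw [if_pos hpa, if_pos hpb, neg_smul, neg_smul, one_smul, one_smul,
      neg_sub_neg] at h
    refine Or.inr (Or.inl ⟨hpa, hpb, ?_⟩)
    rcases h with ⟨i, j, hij, heq⟩ | ⟨i, j, _, heq⟩
    · obtain ⟨h1, h2⟩ := sub_eq_sub (Ne.symm hab) heq
      rw [h1, h2]
      exact hij
    · exact absurd heq (sub_ne_add (Ne.symm hab))
  · -- (T,F)
    exfalso
    rw [if_pos hpa, if_neg hpb, neg_smul, one_smul, one_smul, sub_eq_add_neg,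
      ← neg_add] at h
    rcases h with ⟨i, j, _, heq⟩ | ⟨i, j, _, heq⟩
    · exact absurd (neg_eq_iff_eq_neg.1 heq) (add_ne_neg_sub hab)
    · exact absurd (neg_eq_iff_eq_neg.1 heq) (add_ne_neg_add hab)
  · -- (F,T)
    exact Or.inr (Or.inr ⟨hpa, hpb⟩)
  · -- (F,F)
    rw [if_neg hpa, if_neg hpb, one_smul, one_smul] at h
    refine Or.inl ⟨hpa, hpb, ?_⟩
    rcases h with ⟨i, j, hij, heq⟩ | ⟨i, j, _, heq⟩
    · obtain ⟨h1, h2⟩ := sub_eq_sub hab heq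
      rw [h1, h2]
      exact hij
    · exact absurd heq (sub_ne_add hab)

lemma not_posRoot_neg2 (a : Fin N) :
    ¬ IsPosRoot ((2:ℝ) • ((-1:ℝ) • (Pi.single a 1 : Fin N → ℝ))) := by
  intro h
  rcases h with ⟨i, j, _, heq⟩ | ⟨i, j, _, heq⟩ <;>
  · have h1 := congrFun heq a
    have h2 := congrFun heq i
    simp only [Pi.smul_apply, Pi.sub_apply, Pi.add_apply, smul_eq_mul,
      Pi.single_apply, if_pos rfl] at h1 h2
    split_ifs at h1 h2 <;> linarith
end Decode

section Chains
variable {N : ℕ} {τ : Equiv.Perm (Fin N)} {C : Finset (Fin N)} {lo hi : ℕ}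

/-- decode for `wInvE` differences at adjacent positions -/
lemma invE_decode {x y : Fin N} (hxy : x ≠ y)
    (h : IsPosRoot (wInvE τ C x - wInvE τ C y)) :
    (τ.symm x ∉ C ∧ τ.symm y ∉ C ∧ τ.symm x < τ.symm y) ∨
    (τ.symm x ∈ C ∧ τ.symm y ∈ C ∧ τ.symm y < τ.symm x) ∨
    (τ.symm x ∉ C ∧ τ.symm y ∈ C) := by
  have hab : τ.symm x ≠ τ.symm y := fun hh => hxy (by
    have := congrArg τ hh
    simpa using this)
  exact pm_single_decode hab _ _ h

lemma wE_decode {x y : Fin N} (hxy : x ≠ y)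
    (h : IsPosRoot (wE τ C x - wE τ C y)) :
    (x ∉ C ∧ y ∉ C ∧ τ x < τ y) ∨ (x ∈ C ∧ y ∈ C ∧ τ y < τ x) ∨ (x ∉ C ∧ y ∈ C) := by
  have hab : τ x ≠ τ y := fun hh => hxy (τ.injective hh)
  exact pm_single_decode hab _ _ h

variable (hStep : ∀ x y : Fin N, lo ≤ (x:ℕ) → (y:ℕ) = (x:ℕ) + 1 → (y:ℕ) < hi →
    IsPosRoot (wInvE τ C x - wInvE τ C y))

include hStep in
lemma chain_mem : ∀ u v : Fin N, lo ≤ (u:ℕ) → (u:ℕ) ≤ (v:ℕ) → (v:ℕ) < hi →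
    τ.symm u ∈ C → τ.symm v ∈ C := by
  intro u v hu huv hv hmem
  obtain ⟨d, hd⟩ : ∃ d, (v:ℕ) = (u:ℕ) + d := ⟨(v:ℕ) - (u:ℕ), by omega⟩
  clear huv
  induction d generalizing v with
  | zero =>
    have : v = u := Fin.ext (by omega)
    rwa [this]
  | succ d ih =>
    have hvd : (u:ℕ) + d < N := by have := v.isLt; omega
    set v' : Fin N := ⟨(u:ℕ) + d, hvd⟩ with hv'def
    have hv'v : (v' : ℕ) = (u:ℕ) + d := rfl
    have h1 : τ.symm v' ∈ C := ih v' (by omega) rfl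
    have hstep := hStep v' v (by omega) (by omega) hv
    have hne : v' ≠ v := by
      intro hh
      have h3 : (v' : ℕ) = (v : ℕ) := congrArg Fin.val hh
      omega
    rcases invE_decode hne hstep with ⟨h2, _, _⟩ | ⟨_, h2, _⟩ | ⟨h2, _⟩
    · exact absurd h1 h2
    · exact h2
    · exact absurd h1 h2

include hStep in
lemma chain_lt_notmem : ∀ u v : Fin N, lo ≤ (u:ℕ) → (u:ℕ) < (v:ℕ) → (v:ℕ) < hi →
    τ.symm u ∉ C → τ.symm v ∉ C → τ.symm u < τ.symm v := by
  intro u v hu huv hv hmu hmv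
  obtain ⟨d, hd⟩ : ∃ d, (v:ℕ) = (u:ℕ) + (d + 1) := ⟨(v:ℕ) - (u:ℕ) - 1, by omega⟩
  clear huv
  induction d generalizing v with
  | zero =>
    have hne : u ≠ v := by
      intro hh; have := congrArg Fin.val hh; omega
    rcases invE_decode hne (hStep u v hu (by omega) hv) with
      ⟨_, _, h3⟩ | ⟨h2, _, _⟩ | ⟨_, h2⟩
    · exact h3
    · exact absurd h2 hmu
    · exact absurd h2 hmv
  | succ d ih =>
    have hvd : (u:ℕ) + (d + 1) < N := by have := v.isLt; omega
    set v' : Fin N := ⟨(u:ℕ) + (d + 1), hvd⟩ with hv'def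
    have hv'v : (v' : ℕ) = (u:ℕ) + (d + 1) := rfl
    have hne : v' ≠ v := by
      intro hh; have h3 : (v' : ℕ) = (v : ℕ) := congrArg Fin.val hh; omega
    by_cases hm : τ.symm v' ∈ C
    · exfalso
      exact hmv (chain_mem hStep v' v (by omega) (by omega)
        hv hm)
    · have h1 : τ.symm u < τ.symm v' := ih v' (by omega) hm rfl
      rcases invE_decode hne (hStep v' v (by omega) (by omega)
        hv) with ⟨_, _, h3⟩ | ⟨h2, _, _⟩ | ⟨_, h2⟩
      · exact lt_trans h1 h3
      · exact absurd h2 hm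
      · exact absurd h2 hmv

include hStep in
lemma chain_gt_mem : ∀ u v : Fin N, lo ≤ (u:ℕ) → (u:ℕ) < (v:ℕ) → (v:ℕ) < hi →
    τ.symm u ∈ C → τ.symm v ∈ C → τ.symm v < τ.symm u := by
  intro u v hu huv hv hmu hmv
  obtain ⟨d, hd⟩ : ∃ d, (v:ℕ) = (u:ℕ) + (d + 1) := ⟨(v:ℕ) - (u:ℕ) - 1, by omega⟩
  clear huv
  induction d generalizing v with
  | zero =>
    have hne : u ≠ v := by
      intro hh; have := congrArg Fin.val hh; omega
    rcases invE_decode hne (hStep u v hu (by omega) hv) with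
      ⟨h2, _, _⟩ | ⟨_, _, h3⟩ | ⟨h2, _⟩
    · exact absurd hmu h2
    · exact h3
    · exact absurd hmu h2
  | succ d ih =>
    have hvd : (u:ℕ) + (d + 1) < N := by have := v.isLt; omega
    set v' : Fin N := ⟨(u:ℕ) + (d + 1), hvd⟩ with hv'def
    have hv'v : (v' : ℕ) = (u:ℕ) + (d + 1) := rfl
    have hne : v' ≠ v := by
      intro hh; have h3 : (v' : ℕ) = (v : ℕ) := congrArg Fin.val hh; omega
    by_cases hm : τ.symm v' ∈ C
    · have h1 : τ.symm v' < τ.symm u := ih v' (by omega) hm rfl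
      rcases invE_decode hne (hStep v' v (by omega) (by omega)
        hv) with ⟨h2, _, _⟩ | ⟨_, _, h3⟩ | ⟨h2, _⟩
      · exact absurd hm h2
      · exact lt_trans h3 h1
      · exact absurd hm h2
    · exfalso
      exact hm (chain_mem hStep u v' hu (by omega) (by omega)
        hmu)

end Chains

def recov (N t k : ℕ) (m : Fin t → ℕ) (n : Fin k → ℕ)
    (w : Equiv.Perm (Fin N) × Finset (Fin N)) : Fin t → Fin (k + 1) × Bool := fun s =>
  if h : psum m (s:ℕ) < N then
    (⟨blkIdx n ((w.1 ⟨psum m (s:ℕ), h⟩ : Fin N) : ℕ), Nat.lt_succ_of_le (blkIdx_le n _)⟩,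
      decide ((⟨psum m (s:ℕ), h⟩ : Fin N) ∈ w.2))
  else (Fin.last k, false)

section Bwd
variable {N t k : ℕ} {m : Fin t → ℕ} {n : Fin k → ℕ} {r : ℕ}
  {w : Equiv.Perm (Fin N) × Finset (Fin N)}

/-- No minus signs over `C'_0`. -/
lemma no_neg_C0 (hN : 1 ≤ N) (hnr : (∑ i, n i) + r = N)
    (hB3 : ∀ x y : Fin N, (∑ i, n i) ≤ (x:ℕ) → (y:ℕ) = (x:ℕ) + 1 →
      IsPosRoot (wInvE w.1 w.2 x - wInvE w.1 w.2 y))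
    (hB4 : 1 ≤ r → IsPosRoot ((2 : ℝ) • wInvE w.1 w.2 ⟨N - 1, by omega⟩)) :
    ∀ u : Fin N, (∑ i, n i) ≤ (u:ℕ) → w.1.symm u ∉ w.2 := by
  intro u hu hmem
  have hr1 : 1 ≤ r := by
    have := u.isLt
    omega
  have hp : N - 1 < N := by omega
  have hStep : ∀ x y : Fin N, (∑ i, n i) ≤ (x:ℕ) → (y:ℕ) = (x:ℕ) + 1 → (y:ℕ) < N →
      IsPosRoot (wInvE w.1 w.2 x - wInvE w.1 w.2 y) :=
    fun x y h1 h2 _ => hB3 x y h1 h2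
  have hlast : w.1.symm (⟨N - 1, hp⟩ : Fin N) ∈ w.2 := by
    refine chain_mem hStep u ⟨N - 1, hp⟩ hu ?_ ?_ hmem
    · show (u:ℕ) ≤ N - 1
      have := u.isLt
      omega
    · show N - 1 < N
      omega
  have h2e := hB4 hr1
  rw [wInvE] at h2e
  rw [if_pos hlast] at h2e
  exact not_posRoot_neg2 _ h2e

/-- (iii) decoded: membership and target block agree across a block. -/
lemma same_block_decode (hN : 1 ≤ N) (hnr : (∑ i, n i) + r = N)
    (hB3 : ∀ x y : Fin N, (∑ i, n i) ≤ (x:ℕ) → (y:ℕ) = (x:ℕ) + 1 →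
      IsPosRoot (wInvE w.1 w.2 x - wInvE w.1 w.2 y))
    (hB4 : 1 ≤ r → IsPosRoot ((2 : ℝ) • wInvE w.1 w.2 ⟨N - 1, by omega⟩))
    (hB5 : ∀ s : Fin t, ∀ x y : Fin N,
      psum m (s : ℕ) ≤ (x : ℕ) → (x : ℕ) < psum m ((s : ℕ) + 1) →
      psum m (s : ℕ) ≤ (y : ℕ) → (y : ℕ) < psum m ((s : ℕ) + 1) → x ≠ y →
      ((∃ i : Fin k, ∃ u v : Fin N,
          psum n (i : ℕ) ≤ (u : ℕ) ∧ (u : ℕ) < psum n ((i : ℕ) + 1) ∧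
          psum n (i : ℕ) ≤ (v : ℕ) ∧ (v : ℕ) < psum n ((i : ℕ) + 1) ∧
          (wE w.1 w.2 x - wE w.1 w.2 y = (Pi.single u 1 : Fin N → ℝ) - Pi.single v 1 ∨
            wE w.1 w.2 x - wE w.1 w.2 y =
              -((Pi.single u 1 : Fin N → ℝ) - Pi.single v 1))) ∨
        (∃ u v : Fin N, (∑ i, n i) ≤ (u : ℕ) ∧ (∑ i, n i) ≤ (v : ℕ) ∧
          (wE w.1 w.2 x - wE w.1 w.2 y = (Pi.single u 1 : Fin N → ℝ) + Pi.single v 1 ∨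
            wE w.1 w.2 x - wE w.1 w.2 y =
              -((Pi.single u 1 : Fin N → ℝ) + Pi.single v 1) ∨
            wE w.1 w.2 x - wE w.1 w.2 y = (Pi.single u 1 : Fin N → ℝ) - Pi.single v 1 ∨
            wE w.1 w.2 x - wE w.1 w.2 y =
              -((Pi.single u 1 : Fin N → ℝ) - Pi.single v 1)))))
    {s : Fin t} {x y : Fin N}
    (hx : psum m (s:ℕ) ≤ (x:ℕ)) (hx2 : (x:ℕ) < psum m ((s:ℕ)+1))
    (hy : psum m (s:ℕ) ≤ (y:ℕ)) (hy2 : (y:ℕ) < psum m ((s:ℕ)+1)) (hxy : x ≠ y) :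
    (x ∈ w.2 ↔ y ∈ w.2) ∧
      blkIdx n ((w.1 x : Fin N):ℕ) = blkIdx n ((w.1 y : Fin N):ℕ) := by
  have hC0 := no_neg_C0 hN hnr hB3 hB4
  have hab : w.1 x ≠ w.1 y := fun hh => hxy (w.1.injective hh)
  have hd := hB5 s x y hx hx2 hy hy2 hxy
  by_cases hmx : x ∈ w.2 <;> by_cases hmy : y ∈ w.2
  · -- (T,T)
    refine ⟨by tauto, ?_⟩
    rw [wE, wE, if_pos hmx, if_pos hmy, neg_smul, neg_smul, one_smul, one_smul,
      neg_sub_neg] at hd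
    rcases hd with ⟨i, u, v, b1, b2, b3, b4, heq | heq⟩ | ⟨u, v, b1, b2, h1 | h1 | h1 | h1⟩
    · obtain ⟨e1, e2⟩ := sub_eq_sub (Ne.symm hab) heq
      rw [e2, e1, (blkIdx_eq_iff n _ _ i.isLt).2 ⟨b1, b2⟩,
        (blkIdx_eq_iff n _ _ i.isLt).2 ⟨b3, b4⟩]
    · rw [neg_sub] at heq
      obtain ⟨e1, e2⟩ := sub_eq_sub (Ne.symm hab) heq
      rw [e2, e1, (blkIdx_eq_iff n _ _ i.isLt).2 ⟨b1, b2⟩,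
        (blkIdx_eq_iff n _ _ i.isLt).2 ⟨b3, b4⟩]
    · exact absurd h1 (sub_ne_add (Ne.symm hab))
    · exact absurd h1 (sub_ne_neg_add (Ne.symm hab))
    · obtain ⟨e1, e2⟩ := sub_eq_sub (Ne.symm hab) h1
      rw [e2, e1, blkIdx_eq_of_ge n _ b1, blkIdx_eq_of_ge n _ b2]
    · rw [neg_sub] at h1
      obtain ⟨e1, e2⟩ := sub_eq_sub (Ne.symm hab) h1
      rw [e2, e1, blkIdx_eq_of_ge n _ b1, blkIdx_eq_of_ge n _ b2]
  · -- (T,F) : impossible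
    exfalso
    rw [wE, wE, if_pos hmx, if_neg hmy, neg_smul, one_smul, one_smul,
      sub_eq_add_neg, ← neg_add] at hd
    rcases hd with ⟨i, u, v, b1, b2, b3, b4, heq | heq⟩ | ⟨u, v, b1, b2, h1 | h1 | h1 | h1⟩
    · exact absurd (neg_eq_iff_eq_neg.1 heq) (add_ne_neg_sub hab)
    · rw [neg_eq_iff_eq_neg, neg_neg] at heq
      exact absurd heq (add_ne_sub hab)
    · exact absurd (neg_eq_iff_eq_neg.1 h1) (add_ne_neg_add hab)
    · rw [neg_eq_iff_eq_neg, neg_neg] at h1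
      rcases add_eq_add hab h1 with ⟨e1, _⟩ | ⟨e1, _⟩
      · refine hC0 (w.1 x) (by rw [e1]; exact b1) ?_
        rw [Equiv.symm_apply_apply]
        exact hmx
      · refine hC0 (w.1 x) (by rw [e1]; exact b2) ?_
        rw [Equiv.symm_apply_apply]
        exact hmx
    · exact absurd (neg_eq_iff_eq_neg.1 h1) (add_ne_neg_sub hab)
    · rw [neg_eq_iff_eq_neg, neg_neg] at h1
      exact absurd h1 (add_ne_sub hab)
  · -- (F,T) : impossible
    exfalso
    rw [wE, wE, if_neg hmx, if_pos hmy, neg_smul, one_smul, one_smul,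
      sub_neg_eq_add] at hd
    rcases hd with ⟨i, u, v, b1, b2, b3, b4, heq | heq⟩ | ⟨u, v, b1, b2, h1 | h1 | h1 | h1⟩
    · exact absurd heq (add_ne_sub hab)
    · exact absurd heq (add_ne_neg_sub hab)
    · rcases add_eq_add hab h1 with ⟨_, e2⟩ | ⟨_, e2⟩
      · refine hC0 (w.1 y) (by rw [e2]; exact b2) ?_
        rw [Equiv.symm_apply_apply]
        exact hmy
      · refine hC0 (w.1 y) (by rw [e2]; exact b1) ?_
        rw [Equiv.symm_apply_apply]
        exact hmy
    · exact absurd h1 (add_ne_neg_add hab)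
    · exact absurd h1 (add_ne_sub hab)
    · exact absurd h1 (add_ne_neg_sub hab)
  · -- (F,F)
    refine ⟨by tauto, ?_⟩
    rw [wE, wE, if_neg hmx, if_neg hmy, one_smul, one_smul] at hd
    rcases hd with ⟨i, u, v, b1, b2, b3, b4, heq | heq⟩ | ⟨u, v, b1, b2, h1 | h1 | h1 | h1⟩
    · obtain ⟨e1, e2⟩ := sub_eq_sub hab heq
      rw [e1, e2, (blkIdx_eq_iff n _ _ i.isLt).2 ⟨b1, b2⟩,
        (blkIdx_eq_iff n _ _ i.isLt).2 ⟨b3, b4⟩]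
    · rw [neg_sub] at heq
      obtain ⟨e1, e2⟩ := sub_eq_sub hab heq
      rw [e1, e2, (blkIdx_eq_iff n _ _ i.isLt).2 ⟨b3, b4⟩,
        (blkIdx_eq_iff n _ _ i.isLt).2 ⟨b1, b2⟩]
    · exact absurd h1 (sub_ne_add hab)
    · exact absurd h1 (sub_ne_neg_add hab)
    · obtain ⟨e1, e2⟩ := sub_eq_sub hab h1
      rw [e1, e2, blkIdx_eq_of_ge n _ b1, blkIdx_eq_of_ge n _ b2]
    · rw [neg_sub] at h1
      obtain ⟨e1, e2⟩ := sub_eq_sub hab h1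
      rw [e1, e2, blkIdx_eq_of_ge n _ b2, blkIdx_eq_of_ge n _ b1]

end Bwd

section Bwd2
variable {N t k : ℕ} {m : Fin t → ℕ} {n : Fin k → ℕ} {r : ℕ}
  {w : Equiv.Perm (Fin N) × Finset (Fin N)}

/-- abbreviation for the conclusion of `same_block_decode` -/
def SB (m : Fin t → ℕ) (n : Fin k → ℕ) (w : Equiv.Perm (Fin N) × Finset (Fin N)) : Prop :=
  ∀ (s : Fin t) (x y : Fin N), psum m (s:ℕ) ≤ (x:ℕ) → (x:ℕ) < psum m ((s:ℕ)+1) →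
    psum m (s:ℕ) ≤ (y:ℕ) → (y:ℕ) < psum m ((s:ℕ)+1) → x ≠ y →
    ((x ∈ w.2 ↔ y ∈ w.2) ∧ blkIdx n ((w.1 x : Fin N):ℕ) = blkIdx n ((w.1 y : Fin N):ℕ))

lemma psum_s_lt (hm : ∀ s, 0 < m s) (hms : ∑ s, m s = N) (s : Fin t) :
    psum m (s:ℕ) < N := by
  have h1 := psum_succ m (s:ℕ) s.isLt
  have h2 := psum_m_le hms ((s:ℕ) + 1)
  have := hm ⟨(s:ℕ), s.isLt⟩
  omega

lemma lab_recov (hm : ∀ s, 0 < m s) (hms : ∑ s, m s = N) (hSB : SB m n w) (x : Fin N) :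
    ((labOf m (recov N t k m n w) (x:ℕ)).1 : ℕ) = blkIdx n ((w.1 x : Fin N):ℕ) ∧
    ((labOf m (recov N t k m n w) (x:ℕ)).2 = true ↔ x ∈ w.2) := by
  have hbx : psum m (blkIdx m (x:ℕ)) ≤ (x:ℕ) ∧ (x:ℕ) < psum m (blkIdx m (x:ℕ) + 1) :=
    (blkIdx_eq_iff m _ _ (blkm_lt hms x)).1 rfl
  have hlt : psum m ((blkF hms x : Fin t):ℕ) < N := psum_s_lt hm hms _
  rw [labOf_eq hms, recov, dif_pos hlt]
  have hx0b : psum m ((blkF hms x : Fin t):ℕ) ≤ psum m ((blkF hms x : Fin t):ℕ) ∧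
      psum m ((blkF hms x : Fin t):ℕ) < psum m (((blkF hms x : Fin t):ℕ) + 1) := by
    refine ⟨le_rfl, ?_⟩
    have h1 := psum_succ m ((blkF hms x : Fin t):ℕ) (blkF hms x).isLt
    have := hm ⟨((blkF hms x : Fin t):ℕ), (blkF hms x).isLt⟩
    omega
  by_cases hxx : (⟨psum m ((blkF hms x : Fin t):ℕ), hlt⟩ : Fin N) = x
  · constructor
    · show blkIdx n ((w.1 ⟨psum m ((blkF hms x : Fin t):ℕ), hlt⟩ : Fin N):ℕ)
        = blkIdx n ((w.1 x : Fin N):ℕ)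
      rw [hxx]
    · show decide ((⟨psum m ((blkF hms x : Fin t):ℕ), hlt⟩ : Fin N) ∈ w.2) = true ↔ x ∈ w.2
      rw [hxx, decide_eq_true_eq]
  · have hsb := hSB (blkF hms x) ⟨psum m ((blkF hms x : Fin t):ℕ), hlt⟩ x
      hx0b.1 hx0b.2 hbx.1 hbx.2 hxx
    constructor
    · show blkIdx n ((w.1 ⟨psum m ((blkF hms x : Fin t):ℕ), hlt⟩ : Fin N):ℕ)
        = blkIdx n ((w.1 x : Fin N):ℕ)
      exact hsb.2
    · show decide ((⟨psum m ((blkF hms x : Fin t):ℕ), hlt⟩ : Fin N) ∈ w.2) = true ↔ x ∈ w.2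
      rw [decide_eq_true_eq]
      exact hsb.1

lemma recov_c1 (hm : ∀ s, 0 < m s) (hms : ∑ s, m s = N)
    (hc0 : ∀ u : Fin N, (∑ i, n i) ≤ (u:ℕ) → w.1.symm u ∉ w.2) :
    ∀ s, ((recov N t k m n w) s).1 = Fin.last k → ((recov N t k m n w) s).2 = false := by
  intro s h
  have hlt : psum m (s:ℕ) < N := psum_s_lt hm hms s
  rw [recov, dif_pos hlt] at h ⊢
  have hval : blkIdx n ((w.1 ⟨psum m (s:ℕ), hlt⟩ : Fin N):ℕ) = k := by
    have := congrArg Fin.val h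
    simpa using this
  have hge : (∑ i, n i) ≤ ((w.1 ⟨psum m (s:ℕ), hlt⟩ : Fin N):ℕ) := by
    have := psum_le_of_blkIdx n (u := ((w.1 ⟨psum m (s:ℕ), hlt⟩ : Fin N):ℕ)) (j := k)
      (le_of_eq hval.symm)
    rwa [psum_top] at this
  have hnm : (⟨psum m (s:ℕ), hlt⟩ : Fin N) ∉ w.2 := by
    have := hc0 (w.1 ⟨psum m (s:ℕ), hlt⟩) hge
    rwa [Equiv.symm_apply_apply] at this
  show (decide ((⟨psum m (s:ℕ), hlt⟩ : Fin N) ∈ w.2)) = false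
  exact decide_eq_false hnm

lemma recov_card (hm : ∀ s, 0 < m s) (hms : ∑ s, m s = N) (hSB : SB m n w)
    (j : Fin (k + 1)) :
    ∑ s ∈ Finset.univ.filter (fun s => ((recov N t k m n w) s).1 = j), m s
      = ((Finset.univ : Finset (Fin N)).filter
          (fun u : Fin N => blkIdx n ((u : Fin N):ℕ) = (j:ℕ))).card := by
  rw [← card_filter_blocks hm hms (fun s => ((recov N t k m n w) s).1 = j)]
  have h1 : ((Finset.univ : Finset (Fin N)).filter
      (fun x : Fin N => ((recov N t k m n w) (blkF hms x)).1 = j))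
      = ((Finset.univ : Finset (Fin N)).filter
        (fun x : Fin N => blkIdx n ((w.1 x : Fin N):ℕ) = (j:ℕ))) := by
    apply Finset.filter_congr
    intro x _
    have hl := (lab_recov hm hms hSB x).1
    rw [labOf_eq hms] at hl
    constructor
    · intro h
      rw [← hl, h]
    · intro h
      apply Fin.ext
      rw [← hl] at h
      exact h
  rw [h1]
  apply Finset.card_bij (fun x _ => w.1 x)
  · intro x hx
    simp only [Finset.mem_filter, Finset.mem_univ, true_and] at hx ⊢
    exact hx
  · intro x _ y _ h
    exact w.1.injective h
  · intro u hu
    refine ⟨w.1.symm u, ?_, by simp⟩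
    simp only [Finset.mem_filter, Finset.mem_univ, true_and] at hu ⊢
    rw [Equiv.apply_symm_apply]
    exact hu

lemma recov_c2 (hm : ∀ s, 0 < m s) (hms : ∑ s, m s = N)
    (hnr : (∑ i, n i) + r = N) (hSB : SB m n w) (i : Fin k) :
    n i = ∑ s ∈ Finset.univ.filter
      (fun s => ((recov N t k m n w) s).1 = i.castSucc), m s := by
  rw [recov_card hm hms hSB i.castSucc]
  have h1 : ((Finset.univ : Finset (Fin N)).filter
      (fun u : Fin N => blkIdx n ((u : Fin N):ℕ) = ((i.castSucc : Fin (k+1)):ℕ)))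
      = ((Finset.univ : Finset (Fin N)).filter
        (fun u : Fin N => psum n (i:ℕ) ≤ (u:ℕ) ∧ (u:ℕ) < psum n ((i:ℕ) + 1))) := by
    apply Finset.filter_congr
    intro u _
    simp only [Fin.coe_castSucc]
    rw [blkIdx_eq_iff n _ _ i.isLt]
  rw [h1, card_filter_Ico N _ _ ?hb]
  · have := psum_succ n (i:ℕ) i.isLt
    simp only [Fin.eta] at this
    omega
  case hb =>
    have h2 : psum n ((i:ℕ) + 1) ≤ psum n k := psum_mono n i.isLt
    rw [psum_top] at h2
    omega

lemma recov_c3 (hm : ∀ s, 0 < m s) (hms : ∑ s, m s = N)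
    (hnr : (∑ i, n i) + r = N) (hSB : SB m n w) :
    r = ∑ s ∈ Finset.univ.filter
      (fun s => ((recov N t k m n w) s).1 = Fin.last k), m s := by
  rw [recov_card hm hms hSB (Fin.last k)]
  have h1 : ((Finset.univ : Finset (Fin N)).filter
      (fun u : Fin N => blkIdx n ((u : Fin N):ℕ) = ((Fin.last k : Fin (k+1)):ℕ)))
      = ((Finset.univ : Finset (Fin N)).filter
        (fun u : Fin N => (∑ i, n i) ≤ (u:ℕ) ∧ (u:ℕ) < N)) := by
    apply Finset.filter_congr
    intro u _
    simp only [Fin.val_last]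
    constructor
    · intro h
      have := psum_le_of_blkIdx n (u := ((u : Fin N):ℕ)) (j := k) (le_of_eq h.symm)
      rw [psum_top] at this
      exact ⟨this, u.isLt⟩
    · intro h
      exact blkIdx_eq_of_ge n _ h.1
  rw [h1, card_filter_Ico N _ _ le_rfl]
  omega

end Bwd2

section L1
variable {N t k : ℕ} {m : Fin t → ℕ} {n : Fin k → ℕ} {r : ℕ}
  {c : Fin t → Fin (k + 1) × Bool}

lemma recov_phiD (hm : ∀ s, 0 < m s) (hms : ∑ s, m s = N)
    (hc2 : ∀ i : Fin k, n i =
      ∑ s ∈ Finset.univ.filter (fun s => (c s).1 = i.castSucc), m s) :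
    recov N t k m n (PhiD N m c) = c := by
  funext s
  have hlt : psum m (s:ℕ) < N := psum_s_lt hm hms s
  have hx0 : ((⟨psum m (s:ℕ), hlt⟩ : Fin N) : ℕ) = psum m (s:ℕ) := rfl
  have hb : blkIdx m ((⟨psum m (s:ℕ), hlt⟩ : Fin N) : ℕ) = (s:ℕ) := by
    refine (blkIdx_eq_iff m _ _ s.isLt).2 ⟨le_rfl, ?_⟩
    have h1 := psum_succ m (s:ℕ) s.isLt
    have := hm ⟨(s:ℕ), s.isLt⟩
    omega
  have hlab : labOf m c ((⟨psum m (s:ℕ), hlt⟩ : Fin N) : ℕ) = c s := by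
    rw [labOf_eq hms]; congr 1; exact Fin.ext hb
  show recov N t k m n (PhiD N m c) s = c s
  rw [recov, dif_pos hlt]
  refine Prod.ext (Fin.ext ?_) ?_
  · show blkIdx n (((PhiD N m c).1 ⟨psum m (s:ℕ), hlt⟩ : Fin N) : ℕ) = ((c s).1 : ℕ)
    have key : blkIdx n ((((Tuple.sort (keyD N m c))⁻¹ ⟨psum m (s:ℕ), hlt⟩ : Fin N)) : ℕ)
        = ((c s).1 : ℕ) := by
      by_cases hlow : ((c s).1 : ℕ) < k
      · have hb2 := (lab1_eq_iff_low hm hms hc2 ((c s).1:ℕ) hlow ⟨psum m (s:ℕ), hlt⟩).1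
          (by rw [hlab])
        exact (blkIdx_eq_iff n _ _ hlow).2 hb2
      · have hkk := lab1_le (m := m) (c := c) ((⟨psum m (s:ℕ), hlt⟩ : Fin N) : ℕ)
        have hkv : ((c s).1 : ℕ) = k := by
          rw [hlab] at hkk
          omega
        have hb2 := (lab1_eq_iff_top hm hms hc2 ⟨psum m (s:ℕ), hlt⟩).1
          (by rw [hlab]; exact hkv)
        rw [psum_top] at hb2
        rw [hkv]
        exact blkIdx_eq_of_ge n _ hb2
    exact key
  · show decide ((⟨psum m (s:ℕ), hlt⟩ : Fin N) ∈ (PhiD N m c).2) = (c s).2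
    have hmem := mem_Phi2_iff (m := m) (c := c) (⟨psum m (s:ℕ), hlt⟩ : Fin N)
    rw [hlab] at hmem
    cases hv : (c s).2 with
    | false =>
      refine decide_eq_false (fun hx => ?_)
      have := hmem.1 hx
      rw [hv] at this
      simp at this
    | true => exact decide_eq_true (hmem.2 hv)

end L1

section Bwd3
variable {N t k : ℕ} {m : Fin t → ℕ} {n : Fin k → ℕ} {r : ℕ}
  {w : Equiv.Perm (Fin N) × Finset (Fin N)}

lemma blk_chain (hSB : SB m n w)
    (hB1 : ∀ s : Fin t, ∀ x y : Fin N, psum m (s : ℕ) ≤ (x : ℕ) →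
      (y : ℕ) = (x : ℕ) + 1 → (y : ℕ) < psum m ((s : ℕ) + 1) →
      IsPosRoot (wE w.1 w.2 x - wE w.1 w.2 y))
    {s : Fin t} : ∀ x y : Fin N, psum m (s:ℕ) ≤ (x:ℕ) → (x:ℕ) < psum m ((s:ℕ)+1) →
    psum m (s:ℕ) ≤ (y:ℕ) → (y:ℕ) < psum m ((s:ℕ)+1) → (x:ℕ) < (y:ℕ) →
    (x ∉ w.2 → w.1 x < w.1 y) ∧ (x ∈ w.2 → w.1 y < w.1 x) := by
  intro x y hx hx2 hy hy2 hxy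
  obtain ⟨d, hd⟩ : ∃ d, (y:ℕ) = (x:ℕ) + (d + 1) := ⟨(y:ℕ) - (x:ℕ) - 1, by omega⟩
  clear hxy
  induction d generalizing y with
  | zero =>
    have hne : x ≠ y := fun hh => by
      have : (x:ℕ) = (y:ℕ) := congrArg Fin.val hh
      omega
    have hsb := hSB s x y hx hx2 hy hy2 hne
    rcases wE_decode hne (hB1 s x y hx (by omega) hy2) with
      ⟨h1, _, h3⟩ | ⟨h1, _, h3⟩ | ⟨h1, h2⟩
    · exact ⟨fun _ => h3, fun hxm => absurd hxm h1⟩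
    · exact ⟨fun hnx => absurd h1 hnx, fun _ => h3⟩
    · exact absurd (hsb.1.2 h2) h1
  | succ d ih =>
    have hvd : (x:ℕ) + (d + 1) < N := by have := y.isLt; omega
    set y' : Fin N := ⟨(x:ℕ) + (d + 1), hvd⟩ with hy'def
    have hy'v : (y' : ℕ) = (x:ℕ) + (d + 1) := rfl
    have hih := ih y' (by omega) (by omega) rfl
    have hney : y' ≠ y := fun hh => by
      have : (y':ℕ) = (y:ℕ) := congrArg Fin.val hh
      omega
    have hnexy : x ≠ y' := fun hh => by
      have : (x:ℕ) = (y':ℕ) := congrArg Fin.val hh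
      omega
    have hney2 : x ≠ y := fun hh => by
      have : (x:ℕ) = (y:ℕ) := congrArg Fin.val hh
      omega
    have hsb1 := hSB s x y' hx hx2 (by omega) (by omega) hnexy
    have hsb2 := hSB s x y hx hx2 hy hy2 hney2
    have hstep := wE_decode hney (hB1 s y' y (by omega) (by omega) hy2)
    constructor
    · intro hnx
      have hny' : y' ∉ w.2 := fun hh => hnx (hsb1.1.2 hh)
      have hny : y ∉ w.2 := fun hh => hnx (hsb2.1.2 hh)
      rcases hstep with ⟨_, _, h3⟩ | ⟨h1, _, _⟩ | ⟨_, h2⟩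
      · exact lt_trans (hih.1 hnx) h3
      · exact absurd h1 hny'
      · exact absurd h2 hny
    · intro hxm
      have hmy' : y' ∈ w.2 := hsb1.1.1 hxm
      rcases hstep with ⟨h1, _, _⟩ | ⟨_, _, h3⟩ | ⟨h1, _⟩
      · exact absurd hmy' h1
      · exact lt_trans h3 (hih.2 hxm)
      · exact absurd hmy' h1

lemma main_order (hN : 1 ≤ N) (hm : ∀ s, 0 < m s) (hms : ∑ s, m s = N)
    (hnr : (∑ i, n i) + r = N)
    (hB1 : ∀ s : Fin t, ∀ x y : Fin N, psum m (s : ℕ) ≤ (x : ℕ) →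
      (y : ℕ) = (x : ℕ) + 1 → (y : ℕ) < psum m ((s : ℕ) + 1) →
      IsPosRoot (wE w.1 w.2 x - wE w.1 w.2 y))
    (hB2 : ∀ i : Fin k, ∀ x y : Fin N, psum n (i : ℕ) ≤ (x : ℕ) →
      (y : ℕ) = (x : ℕ) + 1 → (y : ℕ) < psum n ((i : ℕ) + 1) →
      IsPosRoot (wInvE w.1 w.2 x - wInvE w.1 w.2 y))
    (hB3 : ∀ x y : Fin N, (∑ i, n i) ≤ (x:ℕ) → (y:ℕ) = (x:ℕ) + 1 →
      IsPosRoot (wInvE w.1 w.2 x - wInvE w.1 w.2 y))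
    (hSB : SB m n w)
    (hC0 : ∀ u : Fin N, (∑ i, n i) ≤ (u:ℕ) → w.1.symm u ∉ w.2) :
    ∀ x y : Fin N, keyD N m (recov N t k m n w) x < keyD N m (recov N t k m n w) y →
      w.1 x < w.1 y := by
  intro x y hK
  have hne : x ≠ y := fun hh => by rw [hh] at hK; exact lt_irrefl _ hK
  have hτne : w.1 x ≠ w.1 y := fun hh => hne (w.1.injective hh)
  have hjx := (lab_recov hm hms hSB x).1
  have hjy := (lab_recov hm hms hSB y).1
  have hmx := (lab_recov hm hms hSB x).2
  have hmy := (lab_recov hm hms hSB y).2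
  have hstepC0 : ∀ a b : Fin N, (∑ i, n i) ≤ (a:ℕ) → (b:ℕ) = (a:ℕ) + 1 → (b:ℕ) < N →
      IsPosRoot (wInvE w.1 w.2 a - wInvE w.1 w.2 b) := fun a b h1 h2 _ => hB3 a b h1 h2
  rcases (keyD_lt_iff hms x y).1 hK with hdig | ⟨hdig, hbp | ⟨hbp, hpp⟩⟩
  · -- digit case
    rw [dig, dig] at hdig
    have hcase : ((labOf m (recov N t k m n w) (x:ℕ)).1:ℕ)
          < ((labOf m (recov N t k m n w) (y:ℕ)).1:ℕ)
        ∨ (((labOf m (recov N t k m n w) (x:ℕ)).1:ℕ)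
            = ((labOf m (recov N t k m n w) (y:ℕ)).1:ℕ)
          ∧ (labOf m (recov N t k m n w) (x:ℕ)).2 = false
          ∧ (labOf m (recov N t k m n w) (y:ℕ)).2 = true) := by
      rcases hex : (labOf m (recov N t k m n w) (x:ℕ)).2 <;>
        rcases hey : (labOf m (recov N t k m n w) (y:ℕ)).2 <;>
          rw [hex, hey] at hdig <;> simp only [if_true, Bool.false_eq_true, if_false] at hdig
      · left; omega
      · rcases Nat.lt_or_ge ((labOf m (recov N t k m n w) (x:ℕ)).1:ℕ)
          ((labOf m (recov N t k m n w) (y:ℕ)).1:ℕ) with h | h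
        · left; exact h
        · right; exact ⟨by omega, rfl, rfl⟩
      · left; omega
      · left; omega
    rcases hcase with hlt | ⟨heq, hex, hey⟩
    · by_contra hcon
      have hle : ((w.1 y : Fin N):ℕ) ≤ ((w.1 x : Fin N):ℕ) :=
        Fin.le_def.1 (le_of_not_gt hcon)
      have hmono := blkIdx_mono n hle
      rw [hjx, hjy] at hlt
      omega
    · have hxC : x ∉ w.2 := by rw [hex] at hmx; simpa using hmx
      have hyC : y ∈ w.2 := by rw [hey] at hmy; simpa using hmy
      have hty : ((w.1 y : Fin N):ℕ) < ∑ i, n i := by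
        by_contra hge
        have hge2 : (∑ i, n i) ≤ ((w.1 y : Fin N):ℕ) := by omega
        have hh := hC0 (w.1 y) hge2
        rw [Equiv.symm_apply_apply] at hh
        exact hh hyC
      have hjk : blkIdx n ((w.1 y : Fin N):ℕ) < k := blkIdx_lt n _ hty
      have hjxy : blkIdx n ((w.1 x : Fin N):ℕ) = blkIdx n ((w.1 y : Fin N):ℕ) := by
        rw [← hjx, ← hjy]; omega
      by_contra hcon
      have hlt2 : w.1 y < w.1 x := lt_of_le_of_ne (le_of_not_gt hcon) (Ne.symm hτne)
      have hstep : ∀ a b : Fin N, psum n (blkIdx n ((w.1 y : Fin N):ℕ)) ≤ (a:ℕ) →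
          (b:ℕ) = (a:ℕ) + 1 → (b:ℕ) < psum n (blkIdx n ((w.1 y : Fin N):ℕ) + 1) →
          IsPosRoot (wInvE w.1 w.2 a - wInvE w.1 w.2 b) :=
        fun a b h1 h2 h3 => hB2 ⟨blkIdx n ((w.1 y : Fin N):ℕ), hjk⟩ a b h1 h2 h3
      have hub : ((w.1 x : Fin N):ℕ) < psum n (blkIdx n ((w.1 y : Fin N):ℕ) + 1) := by
        have := lt_psum_blkIdx_succ n ((w.1 x : Fin N):ℕ) (by omega)
        rw [hjxy] at this
        exact this
      have hmem0 : w.1.symm (w.1 y) ∈ w.2 := by rw [Equiv.symm_apply_apply]; exact hyC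
      have hchain := chain_mem hstep (w.1 y) (w.1 x) (psum_blkIdx_le n _)
        (Fin.le_def.1 (le_of_lt hlt2)) hub hmem0
      rw [Equiv.symm_apply_apply] at hchain
      exact hxC hchain
  · -- block case
    have hlab := (dig_eq_iff x y).1 hdig
    have hl1 : ((labOf m (recov N t k m n w) (x:ℕ)).1:ℕ)
        = ((labOf m (recov N t k m n w) (y:ℕ)).1:ℕ) := by rw [hlab]
    have hj : blkIdx n ((w.1 x : Fin N):ℕ) = blkIdx n ((w.1 y : Fin N):ℕ) := by omega
    cases hex : (labOf m (recov N t k m n w) (x:ℕ)).2 with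
    | false =>
      have hey : (labOf m (recov N t k m n w) (y:ℕ)).2 = false := by
        rw [← hlab]; exact hex
      have hxC : x ∉ w.2 := by rw [hex] at hmx; simpa using hmx
      have hyC : y ∉ w.2 := by rw [hey] at hmy; simpa using hmy
      rw [bposn, bposn, hex, hey] at hbp
      simp only [Bool.false_eq_true, if_false] at hbp
      have hxy : (x:ℕ) < (y:ℕ) := by
        have b1 := lt_psum_blkIdx_succ m (x:ℕ) (blkm_lt hms x)
        have b2 := psum_blkIdx_le m (y:ℕ)
        have b3 : psum m (blkIdx m (x:ℕ) + 1) ≤ psum m (blkIdx m (y:ℕ)) :=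
          psum_mono m (by omega)
        omega
      by_contra hcon
      have hlt2 : w.1 y < w.1 x := lt_of_le_of_ne (le_of_not_gt hcon) (Ne.symm hτne)
      rcases Nat.lt_or_ge (blkIdx n ((w.1 x : Fin N):ℕ)) k with hjk | hjk
      · have hstep : ∀ a b : Fin N, psum n (blkIdx n ((w.1 x : Fin N):ℕ)) ≤ (a:ℕ) →
            (b:ℕ) = (a:ℕ) + 1 → (b:ℕ) < psum n (blkIdx n ((w.1 x : Fin N):ℕ) + 1) →
            IsPosRoot (wInvE w.1 w.2 a - wInvE w.1 w.2 b) :=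
          fun a b h1 h2 h3 => hB2 ⟨blkIdx n ((w.1 x : Fin N):ℕ), hjk⟩ a b h1 h2 h3
        have hlo : psum n (blkIdx n ((w.1 x : Fin N):ℕ)) ≤ ((w.1 y : Fin N):ℕ) := by
          have := psum_blkIdx_le n ((w.1 y : Fin N):ℕ)
          rw [← hj] at this
          exact this
        have hm1 : w.1.symm (w.1 y) ∉ w.2 := by rw [Equiv.symm_apply_apply]; exact hyC
        have hm2 : w.1.symm (w.1 x) ∉ w.2 := by rw [Equiv.symm_apply_apply]; exact hxC
        have hchain := chain_lt_notmem hstep (w.1 y) (w.1 x) hlo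
          (Fin.lt_def.1 hlt2) (lt_psum_blkIdx_succ n _ hjk) hm1 hm2
        rw [Equiv.symm_apply_apply, Equiv.symm_apply_apply] at hchain
        have := Fin.lt_def.1 hchain
        omega
      · have hjk' : blkIdx n ((w.1 x : Fin N):ℕ) = k := le_antisymm (blkIdx_le n _) hjk
        have hgex : (∑ i, n i) ≤ ((w.1 y : Fin N):ℕ) := by
          have := psum_le_of_blkIdx n (u := ((w.1 y : Fin N):ℕ)) (j := k)
            (le_of_eq (by omega))
          rwa [psum_top] at this
        have hm1 : w.1.symm (w.1 y) ∉ w.2 := by rw [Equiv.symm_apply_apply]; exact hyC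
        have hm2 : w.1.symm (w.1 x) ∉ w.2 := by rw [Equiv.symm_apply_apply]; exact hxC
        have hchain := chain_lt_notmem hstepC0 (w.1 y) (w.1 x) hgex
          (Fin.lt_def.1 hlt2) (w.1 x).isLt hm1 hm2
        rw [Equiv.symm_apply_apply, Equiv.symm_apply_apply] at hchain
        have := Fin.lt_def.1 hchain
        omega
    | true =>
      have hey : (labOf m (recov N t k m n w) (y:ℕ)).2 = true := by
        rw [← hlab]; exact hex
      have hxC : x ∈ w.2 := by rw [hex] at hmx; simpa using hmx
      have hyC : y ∈ w.2 := by rw [hey] at hmy; simpa using hmy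
      have htx : ((w.1 x : Fin N):ℕ) < ∑ i, n i := by
        by_contra hge
        have hge2 : (∑ i, n i) ≤ ((w.1 x : Fin N):ℕ) := by omega
        have hh := hC0 (w.1 x) hge2
        rw [Equiv.symm_apply_apply] at hh
        exact hh hxC
      have hjk : blkIdx n ((w.1 x : Fin N):ℕ) < k := blkIdx_lt n _ htx
      rw [bposn, bposn, hex, hey] at hbp
      simp only [if_true] at hbp
      have hbmx := blkm_lt (m := m) hms x
      have hbmy := blkm_lt (m := m) hms y
      have hblt : blkIdx m (y:ℕ) < blkIdx m (x:ℕ) := by omega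
      have hxy : (y:ℕ) < (x:ℕ) := by
        have b1 := lt_psum_blkIdx_succ m (y:ℕ) hbmy
        have b2 := psum_blkIdx_le m (x:ℕ)
        have b3 : psum m (blkIdx m (y:ℕ) + 1) ≤ psum m (blkIdx m (x:ℕ)) :=
          psum_mono m (by omega)
        omega
      by_contra hcon
      have hlt2 : w.1 y < w.1 x := lt_of_le_of_ne (le_of_not_gt hcon) (Ne.symm hτne)
      have hstep : ∀ a b : Fin N, psum n (blkIdx n ((w.1 x : Fin N):ℕ)) ≤ (a:ℕ) →
          (b:ℕ) = (a:ℕ) + 1 → (b:ℕ) < psum n (blkIdx n ((w.1 x : Fin N):ℕ) + 1) →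
          IsPosRoot (wInvE w.1 w.2 a - wInvE w.1 w.2 b) :=
        fun a b h1 h2 h3 => hB2 ⟨blkIdx n ((w.1 x : Fin N):ℕ), hjk⟩ a b h1 h2 h3
      have hlo : psum n (blkIdx n ((w.1 x : Fin N):ℕ)) ≤ ((w.1 y : Fin N):ℕ) := by
        have := psum_blkIdx_le n ((w.1 y : Fin N):ℕ)
        rw [← hj] at this
        exact this
      have hm1 : w.1.symm (w.1 y) ∈ w.2 := by rw [Equiv.symm_apply_apply]; exact hyC
      have hm2 : w.1.symm (w.1 x) ∈ w.2 := by rw [Equiv.symm_apply_apply]; exact hxC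
      have hchain := chain_gt_mem hstep (w.1 y) (w.1 x) hlo
        (Fin.lt_def.1 hlt2) (lt_psum_blkIdx_succ n _ hjk) hm1 hm2
      rw [Equiv.symm_apply_apply, Equiv.symm_apply_apply] at hchain
      have := Fin.lt_def.1 hchain
      omega
  · -- position case
    have hlab := (dig_eq_iff x y).1 hdig
    cases hex : (labOf m (recov N t k m n w) (x:ℕ)).2 with
    | false =>
      have hey : (labOf m (recov N t k m n w) (y:ℕ)).2 = false := by
        rw [← hlab]; exact hex
      have hxC : x ∉ w.2 := by rw [hex] at hmx; simpa using hmx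
      rw [bposn, bposn, hex, hey] at hbp
      rw [pposn, pposn, hex, hey] at hpp
      simp only [Bool.false_eq_true, if_false] at hbp hpp
      have hbx := (blkIdx_eq_iff m (x:ℕ) _ (blkm_lt hms x)).1 rfl
      have hby : psum m (blkIdx m (x:ℕ)) ≤ (y:ℕ) ∧
          (y:ℕ) < psum m (blkIdx m (x:ℕ) + 1) := by
        rw [hbp]
        exact (blkIdx_eq_iff m (y:ℕ) _ (by rw [← hbp]; exact blkm_lt hms x)).1 rfl
      exact (blk_chain hSB hB1 (s := blkF hms x) x y hbx.1 hbx.2 hby.1 hby.2 hpp).1 hxC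
    | true =>
      have hey : (labOf m (recov N t k m n w) (y:ℕ)).2 = true := by
        rw [← hlab]; exact hex
      have hyC : y ∈ w.2 := by rw [hey] at hmy; simpa using hmy
      rw [bposn, bposn, hex, hey] at hbp
      rw [pposn, pposn, hex, hey] at hpp
      simp only [if_true] at hbp hpp
      have hbmx := blkm_lt (m := m) hms x
      have hbmy := blkm_lt (m := m) hms y
      have hbeq : blkIdx m (y:ℕ) = blkIdx m (x:ℕ) := by omega
      have hxval := x.isLt
      have hyval := y.isLt
      have hxy : (y:ℕ) < (x:ℕ) := by omega
      have hby := (blkIdx_eq_iff m (y:ℕ) _ (blkm_lt hms y)).1 rfl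
      have hbx : psum m (blkIdx m (y:ℕ)) ≤ (x:ℕ) ∧
          (x:ℕ) < psum m (blkIdx m (y:ℕ) + 1) := by
        rw [hbeq]
        exact (blkIdx_eq_iff m (x:ℕ) _ hbmx).1 rfl
      exact (blk_chain hSB hB1 (s := blkF hms y) y x hby.1 hby.2 hbx.1 hbx.2 hxy).2 hyC

end Bwd3

/-- The set `S` of signed permutations `w = τ𝔠 ∈ 𝒲_N` satisfying the
reducedness conditions (i), (ii) and the block condition (iii) is in bijection, via
`𝒟 ↦ w_𝒟`, with the set of partitions `𝒟 = (D_1, E_1, …, D_k, E_k, D_0)` of `[1,t]` with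
`n_i = Σ_{j ∈ D_i ∪ E_i} m_j` and `r = Σ_{j ∈ D_0} m_j`. -/
theorem stmt12 (N t k : ℕ) (hN : 1 ≤ N) (m : Fin t → ℕ) (hm : ∀ s, 0 < m s)
    (hms : ∑ s, m s = N) (n : Fin k → ℕ) (r : ℕ) (hnr : (∑ i, n i) + r = N) :
    Set.BijOn (PhiD N m)
      { c : Fin t → Fin (k + 1) × Bool |
        (∀ s, (c s).1 = Fin.last k → (c s).2 = false) ∧
        (∀ i : Fin k, n i =
          ∑ s ∈ Finset.univ.filter (fun s => (c s).1 = i.castSucc), m s) ∧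
        r = ∑ s ∈ Finset.univ.filter (fun s => (c s).1 = Fin.last k), m s }
      { w : Equiv.Perm (Fin N) × Finset (Fin N) |
        -- (i) w maps the roots `e_x - e_{x+1}` inside each `C_s` to positive roots
        (∀ s : Fin t, ∀ x y : Fin N, psum m (s : ℕ) ≤ (x : ℕ) → (y : ℕ) = (x : ℕ) + 1 →
          (y : ℕ) < psum m ((s : ℕ) + 1) → IsPosRoot (wE w.1 w.2 x - wE w.1 w.2 y)) ∧
        -- (ii) w⁻¹ maps the roots `e_x - e_{x+1}` inside each `C'_i`, inside `C'_0`,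
        -- and (if r ≥ 1) the root `2 e_N`, to positive roots
        (∀ i : Fin k, ∀ x y : Fin N, psum n (i : ℕ) ≤ (x : ℕ) → (y : ℕ) = (x : ℕ) + 1 →
          (y : ℕ) < psum n ((i : ℕ) + 1) → IsPosRoot (wInvE w.1 w.2 x - wInvE w.1 w.2 y)) ∧
        (∀ x y : Fin N, (∑ i, n i) ≤ (x : ℕ) → (y : ℕ) = (x : ℕ) + 1 →
          IsPosRoot (wInvE w.1 w.2 x - wInvE w.1 w.2 y)) ∧
        (1 ≤ r → IsPosRoot ((2 : ℝ) • wInvE w.1 w.2 ⟨N - 1, by omega⟩)) ∧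
        -- (iii) w maps each `e_x - e_y` with `x ≠ y` in a common `C_s` to `±(e_u - e_v)`
        -- with `u, v` in a common `C'_i`, or to `± e_u ± e_v` with `u, v ∈ C'_0`
        (∀ s : Fin t, ∀ x y : Fin N,
          psum m (s : ℕ) ≤ (x : ℕ) → (x : ℕ) < psum m ((s : ℕ) + 1) →
          psum m (s : ℕ) ≤ (y : ℕ) → (y : ℕ) < psum m ((s : ℕ) + 1) → x ≠ y →
          ((∃ i : Fin k, ∃ u v : Fin N,
              psum n (i : ℕ) ≤ (u : ℕ) ∧ (u : ℕ) < psum n ((i : ℕ) + 1) ∧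
              psum n (i : ℕ) ≤ (v : ℕ) ∧ (v : ℕ) < psum n ((i : ℕ) + 1) ∧
              (wE w.1 w.2 x - wE w.1 w.2 y =
                  (Pi.single u 1 : Fin N → ℝ) - Pi.single v 1 ∨
                wE w.1 w.2 x - wE w.1 w.2 y =
                  -((Pi.single u 1 : Fin N → ℝ) - Pi.single v 1))) ∨
            (∃ u v : Fin N, (∑ i, n i) ≤ (u : ℕ) ∧ (∑ i, n i) ≤ (v : ℕ) ∧
              (wE w.1 w.2 x - wE w.1 w.2 y =
                  (Pi.single u 1 : Fin N → ℝ) + Pi.single v 1 ∨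
                wE w.1 w.2 x - wE w.1 w.2 y =
                  -((Pi.single u 1 : Fin N → ℝ) + Pi.single v 1) ∨
                wE w.1 w.2 x - wE w.1 w.2 y =
                  (Pi.single u 1 : Fin N → ℝ) - Pi.single v 1 ∨
                wE w.1 w.2 x - wE w.1 w.2 y =
                  -((Pi.single u 1 : Fin N → ℝ) - Pi.single v 1))))) } := by
  obtain ⟨hN', hm', hms', hnr'⟩ := And.intro hN (And.intro hm (And.intro hms hnr))
  refine ⟨?_, ?_, ?_⟩
  · -- MapsTo
    intro c hc
    obtain ⟨hc1, hc2, hc3⟩ := hc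
    exact phiD_mem hN hm hms hnr hc1 hc2 hc3
  · -- InjOn
    intro c1 h1 c2 h2 heq
    have e1 := recov_phiD (n := n) hm hms h1.2.1
    have e2 := recov_phiD (n := n) hm hms h2.2.1
    rw [← e1, ← e2, heq]
  · -- SurjOn
    intro w hw
    obtain ⟨hB1, hB2, hB3, hB4, hB5⟩ := hw
    have hC0 := no_neg_C0 (n := n) hN hnr hB3 hB4
    have hSB : SB m n w := fun s x y a b c' d e =>
      same_block_decode hN hnr hB3 hB4 hB5 a b c' d e
    have hmain := main_order hN hm hms hnr hB1 hB2 hB3 hSB hC0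
    have hiff : ∀ x y : Fin N, w.1 x < w.1 y ↔
        keyD N m (recov N t k m n w) x < keyD N m (recov N t k m n w) y := by
      intro x y
      constructor
      · intro h
        by_contra hk
        rcases lt_trichotomy (keyD N m (recov N t k m n w) x)
          (keyD N m (recov N t k m n w) y) with h1 | h1 | h1
        · exact hk h1
        · have := keyD_inj hms h1
          rw [this] at h
          exact lt_irrefl _ h
        · exact lt_asymm h (hmain y x h1)
      · exact hmain x y
    have hperm := eq_sortInv (keyD_inj hms) w.1 hiff
    refine ⟨recov N t k m n w, ⟨recov_c1 hm hms hC0, fun i => recov_c2 hm hms hnr hSB i,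
      recov_c3 hm hms hnr hSB⟩, ?_⟩
    refine Prod.ext ?_ ?_
    · exact hperm.symm
    · apply Finset.ext
      intro z
      rw [mem_Phi2_iff]
      exact (lab_recov hm hms hSB z).2

end Stmt12
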